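/- arXiv:2604.20631 — 3 statements merged into one kernel-verified Lean document; each statement's English description precedes it below -/
import Mathlib

section
/- Bipartite Curie–Weiss model, subcritical regime: let α_n > 0 with α_n → α̂ ∈ [0,1] and β ≤ 2/(1+α̂). Then the law of m^{(n)} under the deterministic Gibbs measure μ̄_{n,β} converges weakly to the Dirac measure at (0,0): for every bounded continuous φ:ℝ²→ℝ, Σ_{σ∈X_n} μ̄_{n,β}(σ) φ(m^{(n)}(σ)) → φ(0,0) as n→∞ along even n. -/
open MeasureTheory Finset Filter

noncomputable section

/-- Spin value associated with a Boolean. -/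
def spin (b : Bool) : ℝ := if b then 1 else -1

/-- The pair of community magnetizations `(m₁, m₂)` of a configuration. -/
def mag (n : ℕ) (σ : Fin n → Bool) : ℝ × ℝ :=
  ((2 / (n : ℝ)) * ∑ j : Fin n, (if (j : ℕ) < n / 2 then spin (σ j) else 0),
   (2 / (n : ℝ)) * ∑ j : Fin n, (if n / 2 ≤ (j : ℕ) then spin (σ j) else 0))

/-- `E_α(m)`. -/
def Ebil (a : ℝ) (m : ℝ × ℝ) : ℝ := (m.1 ^ 2 + m.2 ^ 2) / 4 + (a / 2) * m.1 * m.2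

/-- One-dimensional entropy term. -/
def entI (x : ℝ) : ℝ :=
  ((1 + x) / 2) * Real.log ((1 + x) / 2) + ((1 - x) / 2) * Real.log ((1 - x) / 2)

/-- Free energy functional `G_{α,β}`. -/
def Gfun (a β : ℝ) (m : ℝ × ℝ) : ℝ := β * Ebil a m - (entI m.1 + entI m.2)

/-- The bipartite Curie–Weiss Hamiltonian `H̄_n(σ) = −(n/2) E_{α_n}(m^{(n)}(σ))`. -/
def Hcw (a : ℝ) (n : ℕ) (σ : Fin n → Bool) : ℝ := -((n : ℝ) / 2) * Ebil a (mag n σ)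

/-- The bipartite Curie–Weiss partition function. -/
def Zcw (a β : ℝ) (n : ℕ) : ℝ := ∑ σ : Fin n → Bool, Real.exp (-β * Hcw a n σ)

/-- Expectation of an observable of the magnetization under the bipartite
Curie–Weiss Gibbs measure. -/
def cwExpect (a β : ℝ) (n : ℕ) (φ : ℝ × ℝ → ℝ) : ℝ :=
  (∑ σ : Fin n → Bool, Real.exp (-β * Hcw a n σ) * φ (mag n σ)) / Zcw a β n

lemma entI_neg (x : ℝ) : entI (-x) = entI x := by
  unfold entI
  ring_nf

lemma entI_zero : entI 0 = - Real.log 2 := by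
  unfold entI
  norm_num
  rw [show (1:ℝ)/2 = 2⁻¹ by norm_num, Real.log_inv]
  ring

-- artanh-type inequality
lemma log_ineq {x : ℝ} (hx : x ∈ Set.Ico (0:ℝ) 1) :
    2*x + 2*x^3/3 ≤ Real.log (1+x) - Real.log (1-x) := by
  set F : ℝ → ℝ := fun y => Real.log (1+y) - Real.log (1-y) - 2*y - 2*y^3/3 with hF
  have key : ∀ y ∈ Set.Ico (0:ℝ) 1, HasDerivAt F (1/(1+y) + 1/(1-y) - 2 - 2*y^2) y := by
    intro y hy
    obtain ⟨h0, h1⟩ := hy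
    have h1p : (0:ℝ) < 1 + y := by linarith
    have h1m : (0:ℝ) < 1 - y := by linarith
    have d1 : HasDerivAt (fun y : ℝ => Real.log (1+y)) (1/(1+y)) y := by
      have := ((hasDerivAt_id y).const_add 1).log (ne_of_gt h1p)
      simpa using this
    have d2 : HasDerivAt (fun y : ℝ => Real.log (1-y)) (-(1/(1-y))) y := by
      have : HasDerivAt (fun y : ℝ => 1 - y) (-1) y := by
        exact (hasDerivAt_id' y).const_sub 1
      have := this.log (ne_of_gt h1m)
      convert this using 1
      field_simp
    have d3 : HasDerivAt (fun y : ℝ => 2*y + 2*y^3/3) (2 + 2*y^2) y := by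
      have h1 : HasDerivAt (fun y : ℝ => y^3) (3*y^2) y := by
        simpa using hasDerivAt_pow 3 y
      have : HasDerivAt (fun y : ℝ => 2*y + 2*y^3/3) _ y := ((hasDerivAt_id y).const_mul 2).add ((h1.const_mul 2).div_const 3)
      convert this using 1
      ring
    have hd : HasDerivAt (fun y : ℝ => Real.log (1+y) - Real.log (1-y) - (2*y + 2*y^3/3)) _ y := (d1.sub d2).sub d3
    have : (fun y : ℝ => Real.log (1+y) - Real.log (1-y) - (2*y + 2*y^3/3)) = F := by
      funext z; simp only [hF]; ring
    rw [this] at hd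
    convert hd using 1
    ring
  have mono : MonotoneOn F (Set.Ico (0:ℝ) 1) := by
    apply monotoneOn_of_deriv_nonneg (convex_Ico 0 1)
    · exact fun y hy => (key y hy).continuousAt.continuousWithinAt
    · intro y hy
      rw [interior_Ico] at hy
      exact ((key y (Set.mem_Ico.2 ⟨le_of_lt hy.1, hy.2⟩)).differentiableAt).differentiableWithinAt
    · intro y hy
      rw [interior_Ico] at hy
      rw [(key y (Set.mem_Ico.2 ⟨le_of_lt hy.1, hy.2⟩)).deriv]
      obtain ⟨h0, h1⟩ := hy
      have h1p : (0:ℝ) < 1 + y := by linarith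
      have h1m : (0:ℝ) < 1 - y := by linarith
      have heq : 1/(1+y) + 1/(1-y) - 2 - 2*y^2 = 2*y^4/((1+y)*(1-y)) := by
        field_simp
        ring
      rw [heq]
      positivity
  have h0 : F 0 = 0 := by simp [hF]
  have := mono (Set.mem_Ico.2 ⟨le_refl 0, one_pos⟩) hx hx.1
  rw [h0] at this
  simp only [hF] at this
  linarith

lemma entI_hasDeriv {y : ℝ} (h1p : (0:ℝ) < 1 + y) (h1m : (0:ℝ) < 1 - y) :
    HasDerivAt entI ((Real.log (1+y) - Real.log (1-y))/2) y := by
  have u : HasDerivAt (fun y : ℝ => (1+y)/2) (1/2) y := by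
    simpa using (((hasDerivAt_id y).const_add 1).div_const 2)
  have v : HasDerivAt (fun y : ℝ => (1-y)/2) (-(1/2)) y := by
    have : HasDerivAt (fun y : ℝ => 1 - y) (-1) y := by
      exact (hasDerivAt_id' y).const_sub 1
    have h' : HasDerivAt (fun y : ℝ => (1-y)/2) (-1/2) y := this.div_const 2
    convert h' using 1; ring
  have hu : ((1+y)/2 : ℝ) ≠ 0 := by positivity
  have hv : ((1-y)/2 : ℝ) ≠ 0 := by positivity
  have d1 := u.mul (u.log hu)
  have d2 := v.mul (v.log hv)
  have hd := d1.add d2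
  have : HasDerivAt entI (1 / 2 * Real.log ((1 + y) / 2) + (1 + y) / 2 * (1 / 2 / ((1 + y) / 2)) +
      (-(1 / 2) * Real.log ((1 - y) / 2) + (1 - y) / 2 * (-(1 / 2) / ((1 - y) / 2)))) y := hd
  convert this using 1
  rw [Real.log_div (by linarith) (by norm_num), Real.log_div (by linarith) (by norm_num)]
  field_simp
  ring

lemma entI_quartic {x : ℝ} (hx : x ∈ Set.Icc (-1:ℝ) 1) :
    x^2/2 + x^4/12 ≤ entI x + Real.log 2 := by
  -- reduce to x ∈ [0,1]
  have key : ∀ y ∈ Set.Icc (0:ℝ) 1, y^2/2 + y^4/12 ≤ entI y + Real.log 2 := by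
    intro y hy
    rcases eq_or_lt_of_le hy.2 with h1 | h1
    · -- y = 1
      subst h1
      have : entI 1 = 0 := by unfold entI; norm_num
      rw [this]
      have := Real.log_two_gt_d9
      norm_num
      linarith
    · -- y ∈ [0,1)
      set h : ℝ → ℝ := fun z => entI z + Real.log 2 - z^2/2 - z^4/12 with hh
      have hderiv : ∀ z ∈ Set.Ico (0:ℝ) 1,
          HasDerivAt h ((Real.log (1+z) - Real.log (1-z))/2 - z - z^3/3) z := by
        intro z hz
        have h1p : (0:ℝ) < 1 + z := by linarith [hz.1]
        have h1m : (0:ℝ) < 1 - z := by linarith [hz.2]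
        have e1 := entI_hasDeriv h1p h1m
        have e2 : HasDerivAt (fun z : ℝ => z^2/2 + z^4/12) (z + z^3/3) z := by
          have p2 : HasDerivAt (fun z : ℝ => z^2) (2*z) z := by simpa using hasDerivAt_pow 2 z
          have p4 : HasDerivAt (fun z : ℝ => z^4) (4*z^3) z := by simpa using hasDerivAt_pow 4 z
          have h' : HasDerivAt (fun z : ℝ => z^2/2 + z^4/12) (2*z/2 + 4*z^3/12) z :=
            (p2.div_const 2).add (p4.div_const 12)
          convert h' using 1; ring
        have hd : HasDerivAt (fun z : ℝ => entI z + Real.log 2 - (z^2/2 + z^4/12)) _ z := (e1.add_const (Real.log 2)).sub e2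
        have hfe : (fun z : ℝ => entI z + Real.log 2 - (z^2/2 + z^4/12)) = h := by
          funext w; simp only [hh]; ring
        rw [hfe] at hd
        convert hd using 1
        ring
      have mono : MonotoneOn h (Set.Ico (0:ℝ) 1) := by
        apply monotoneOn_of_deriv_nonneg (convex_Ico 0 1)
        · exact fun z hz => (hderiv z hz).continuousAt.continuousWithinAt
        · intro z hz
          rw [interior_Ico] at hz
          exact (hderiv z ⟨le_of_lt hz.1, hz.2⟩).differentiableAt.differentiableWithinAt
        · intro z hz
          rw [interior_Ico] at hz
          rw [(hderiv z ⟨le_of_lt hz.1, hz.2⟩).deriv]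
          have := log_ineq (x := z) ⟨le_of_lt hz.1, hz.2⟩
          linarith
      have h0 : h 0 = 0 := by simp [hh, entI_zero]
      have := mono (Set.mem_Ico.2 ⟨le_refl 0, one_pos⟩) ⟨hy.1, h1⟩ hy.1
      rw [h0] at this
      simp only [hh] at this
      linarith
  rcases le_or_gt 0 x with hx0 | hx0
  · exact key x ⟨hx0, hx.2⟩
  · have := key (-x) ⟨by linarith, by linarith [hx.1]⟩
    rw [entI_neg] at this
    calc x^2/2 + x^4/12 = (-x)^2/2 + (-x)^4/12 := by ring
    _ ≤ _ := this

lemma entI_one : entI 1 = 0 := by unfold entI; norm_num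

/-- Entropy upper bound on binomial coefficients. -/
lemma choose_le_exp_entI (k p : ℕ) (hp : p ≤ k) :
    (k.choose p : ℝ) ≤ Real.exp (-(k:ℝ) * entI ((2*(p:ℝ) - k)/k)) := by
  rcases Nat.eq_zero_or_pos k with rfl | hk
  · interval_cases p
    simp [entI]
  have hkR0 : ((k:ℝ)) ≠ 0 := by exact_mod_cast Nat.pos_iff_ne_zero.mp hk
  rcases Nat.eq_zero_or_pos p with rfl | hp0
  · have h : ((2*((0:ℕ):ℝ) - k)/k) = -1 := by
      push_cast
      field_simp
      ring
    rw [h, entI_neg, entI_one]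
    simp
  rcases eq_or_lt_of_le hp with rfl | hpk
  · have h : ((2*(p:ℝ) - p)/p) = 1 := by
      have : (p:ℝ) ≠ 0 := hkR0
      field_simp
      ring
    rw [h, entI_one]
    simp [Nat.choose_self]
  -- main case 0 < p < k
  have hkR : (0:ℝ) < k := by exact_mod_cast hk
  have hpR : (0:ℝ) < p := by exact_mod_cast hp0
  have hkpR : (0:ℝ) < (k:ℝ) - p := by
    have : (p:ℝ) < k := by exact_mod_cast hpk
    linarith
  set x : ℝ := (p:ℝ)/k with hxdef
  set y : ℝ := ((k:ℝ)-p)/k with hydef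
  have hxpos : 0 < x := div_pos hpR hkR
  have hypos : 0 < y := div_pos hkpR hkR
  have hxy : x + y = 1 := by rw [hxdef, hydef]; field_simp; ring
  -- the single-term bound
  have hterm : (k.choose p : ℝ) * (x^p * y^(k-p)) ≤ 1 := by
    have hpow := add_pow x y k
    rw [hxy, one_pow] at hpow
    have hmem : p ∈ range (k+1) := mem_range.2 (Nat.lt_succ_of_le hp)
    have hle : x^p * y^(k-p) * (k.choose p : ℝ) ≤
        ∑ i ∈ range (k+1), x^i * y^(k-i) * (k.choose i : ℝ) := by
      apply Finset.single_le_sum (f := fun i => x^i * y^(k-i) * (k.choose i : ℝ)) _ hmem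
      intro i _
      positivity
    rw [← hpow] at hle
    linarith
  have hA : (0:ℝ) < x^p * y^(k-p) := by positivity
  have hC : (k.choose p : ℝ) ≤ (x^p * y^(k-p))⁻¹ := by
    rw [← one_div]
    exact (le_div_iff₀ hA).2 hterm
  -- identify RHS
  have hm1 : (1 + (2*(p:ℝ) - k)/k)/2 = x := by rw [hxdef]; field_simp; ring
  have hm2 : (1 - (2*(p:ℝ) - k)/k)/2 = y := by rw [hydef]; field_simp; ring
  have hent : (k:ℝ) * entI ((2*(p:ℝ) - k)/k) = (p:ℝ) * Real.log x + ((k:ℝ)-p) * Real.log y := by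
    unfold entI
    rw [hm1, hm2, hxdef, hydef]
    field_simp
    try ring
  have hexp : Real.exp (-(k:ℝ) * entI ((2*(p:ℝ) - k)/k)) = (x^p * y^(k-p))⁻¹ := by
    rw [neg_mul, hent, neg_add, Real.exp_add]
    have e1 : Real.exp (-((p:ℝ) * Real.log x)) = (x^p)⁻¹ := by
      rw [← Real.log_pow, Real.exp_neg, Real.exp_log (by positivity)]
    have e2 : Real.exp (-(((k:ℝ)-p) * Real.log y)) = (y^(k-p))⁻¹ := by
      have : ((k:ℝ) - p) = ((k-p : ℕ) : ℝ) := by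
        rw [Nat.cast_sub hp]
      rw [this, ← Real.log_pow, Real.exp_neg, Real.exp_log (by positivity)]
    rw [e1, e2, mul_inv]
  rw [hexp]
  exact hC

/-- Counting lemma: sums over Boolean configurations grouped by number of `true`s. -/
lemma sum_count (k : ℕ) (f : ℕ → ℝ) :
    ∑ s : Fin k → Bool, f #(univ.filter (fun j => s j)) =
      ∑ p ∈ range (k+1), (k.choose p : ℝ) * f p := by
  have hbij : Function.Bijective (fun s : Fin k → Bool => univ.filter (fun j => s j)) := by
    rw [Function.bijective_iff_has_inverse]
    refine ⟨fun A => fun j => j ∈ A, ?_, ?_⟩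
    · intro s; funext j; simp
    · intro A; ext j; simp
  have h1 : ∑ s : Fin k → Bool, f #(univ.filter (fun j => s j)) =
      ∑ A : Finset (Fin k), f #A := Fintype.sum_bijective _ hbij _ _ (fun s => rfl)
  rw [h1]
  have h2 : ∑ A : Finset (Fin k), f #A = ∑ A ∈ (univ : Finset (Fin k)).powerset, f #A := by
    rw [Finset.powerset_univ]
  rw [h2, Finset.sum_powerset_apply_card]
  simp [Finset.card_univ, nsmul_eq_mul]

/-- number of `true` spins -/
def cnt {k : ℕ} (s : Fin k → Bool) : ℕ := #(univ.filter (fun j => s j))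

lemma sum_count' (k : ℕ) (f : ℕ → ℝ) :
    ∑ s : Fin k → Bool, f (cnt s) = ∑ p ∈ range (k+1), (k.choose p : ℝ) * f p :=
  sum_count k f

lemma cnt_le (k : ℕ) (s : Fin k → Bool) : cnt s ≤ k := by
  unfold cnt
  calc #(univ.filter (fun j => s j)) ≤ #(univ : Finset (Fin k)) := card_le_card (filter_subset _ _)
  _ = k := by simp

lemma spin_sum {k : ℕ} (s : Fin k → Bool) :
    ∑ i : Fin k, spin (s i) = 2 * (cnt s : ℝ) - k := by
  have : ∀ i : Fin k, spin (s i) = 2 * (if s i then (1:ℝ) else 0) - 1 := by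
    intro i; unfold spin; by_cases h : s i <;> simp [h] <;> norm_num
  rw [Finset.sum_congr rfl (fun i _ => this i), Finset.sum_sub_distrib]
  rw [← Finset.mul_sum, Finset.sum_boole]
  simp [cnt]

/-- The combination map -/
def comb (k : ℕ) (st : (Fin k → Bool) × (Fin k → Bool)) : Fin (2*k) → Bool :=
  fun j => if h : (j : ℕ) < k then st.1 ⟨j, h⟩ else st.2 ⟨(j:ℕ) - k, by omega⟩

lemma comb_bijective (k : ℕ) : Function.Bijective (comb k) := by
  rw [Function.bijective_iff_has_inverse]
  refine ⟨fun σ => (fun i => σ ⟨(i:ℕ), by omega⟩, fun i => σ ⟨k + (i:ℕ), by omega⟩), ?_, ?_⟩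
  · rintro ⟨s, t⟩
    simp only [comb, Prod.mk.injEq]
    constructor
    · funext i
      rw [dif_pos i.isLt]
    · funext i
      rw [dif_neg (by omega)]
      congr 1
      apply Fin.ext
      simp
  · intro σ
    funext j
    simp only [comb]
    by_cases h : (j:ℕ) < k
    · rw [dif_pos h]
    · rw [dif_neg h]
      congr 1
      apply Fin.ext
      simp
      omega

lemma mag_comb (k : ℕ) (st : (Fin k → Bool) × (Fin k → Bool)) :
    mag (2*k) (comb k st) =
      ((2 * (cnt st.1 : ℝ) - k) / k, (2 * (cnt st.2 : ℝ) - k) / k) := by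
  rcases Nat.eq_zero_or_pos k with rfl | hk
  · simp [mag]
  have hhalf : (2*k)/2 = k := by omega
  have hkR : ((k:ℝ)) ≠ 0 := by
    have : (0:ℝ) < k := by exact_mod_cast hk
    linarith
  unfold mag
  rw [hhalf]
  have h1 : ∑ j : Fin (2*k), (if (j : ℕ) < k then spin (comb k st j) else 0)
      = ∑ i : Fin k, spin (st.1 i) := by
    rw [← Finset.sum_filter]
    apply Finset.sum_nbij' (i := fun (j : Fin (2*k)) => (⟨(j:ℕ) % k, Nat.mod_lt _ hk⟩ : Fin k))
      (j := fun (i : Fin k) => (⟨(i:ℕ), by omega⟩ : Fin (2*k)))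
    · intro a ha; simp
    · intro a ha
      simp only [mem_filter, mem_univ, true_and]
      omega
    · intro a ha
      simp only [mem_filter, mem_univ, true_and] at ha
      apply Fin.ext; simp [Nat.mod_eq_of_lt ha]
    · intro a ha
      apply Fin.ext; simp [Nat.mod_eq_of_lt a.isLt]
    · intro a ha
      simp only [mem_filter, mem_univ, true_and] at ha
      unfold comb
      rw [dif_pos ha]
      have he : ((⟨(a:ℕ) % k, Nat.mod_lt _ hk⟩ : Fin k)) = (⟨(a:ℕ), ha⟩ : Fin k) := by
        apply Fin.ext; simp [Nat.mod_eq_of_lt ha]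
      rw [he]
  have h2 : ∑ j : Fin (2*k), (if k ≤ (j : ℕ) then spin (comb k st j) else 0)
      = ∑ i : Fin k, spin (st.2 i) := by
    rw [← Finset.sum_filter]
    apply Finset.sum_nbij' (i := fun (j : Fin (2*k)) => (⟨(j:ℕ) - k, by omega⟩ : Fin k))
      (j := fun (i : Fin k) => (⟨k + (i:ℕ), by omega⟩ : Fin (2*k)))
    · intro a ha; simp
    · intro a ha
      simp only [mem_filter, mem_univ, true_and]
      omega
    · intro a ha
      simp only [mem_filter, mem_univ, true_and] at ha
      apply Fin.ext; simp; omega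
    · intro a ha
      apply Fin.ext; simp
    · intro a ha
      simp only [mem_filter, mem_univ, true_and] at ha
      congr 1
      unfold comb
      rw [dif_neg (by omega)]
  rw [h1, h2, spin_sum, spin_sum]
  have hcast : ((2*k : ℕ) : ℝ) = 2 * (k:ℝ) := by push_cast; ring
  rw [hcast]
  rw [Prod.mk.injEq]
  have h2k : (2:ℝ) * (k:ℝ) ≠ 0 := by
    intro h; apply hkR; linarith [h]
  constructor <;> · field_simp

lemma master (k : ℕ) (F : ℝ × ℝ → ℝ) :
    ∑ σ : Fin (2*k) → Bool, F (mag (2*k) σ)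
    = ∑ p ∈ range (k+1), ∑ q ∈ range (k+1),
        (k.choose p : ℝ) * (k.choose q : ℝ) *
          F ((2*(p:ℝ) - k)/k, (2*(q:ℝ) - k)/k) := by
  have hbij := Fintype.sum_bijective (comb k) (comb_bijective k)
      (fun st => F (mag (2*k) (comb k st))) (fun σ => F (mag (2*k) σ)) (fun st => rfl)
  rw [← hbij]
  have : ∀ st : (Fin k → Bool) × (Fin k → Bool),
      F (mag (2*k) (comb k st)) =
      F ((2 * (cnt st.1 : ℝ) - k) / k, (2 * (cnt st.2 : ℝ) - k) / k) := by
    intro st; rw [mag_comb]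
  rw [Fintype.sum_congr _ _ this, Fintype.sum_prod_type]
  have inner : ∀ s : Fin k → Bool,
      ∑ t : Fin k → Bool, F ((2 * (cnt s : ℝ) - k) / k, (2 * (cnt t : ℝ) - k) / k)
      = ∑ q ∈ range (k+1), (k.choose q : ℝ) * F ((2 * (cnt s : ℝ) - k) / k, (2*(q:ℝ) - k)/k) :=
    fun s => sum_count' k (fun q => F ((2 * (cnt s : ℝ) - k) / k, (2*(q:ℝ) - k)/k))
  rw [Finset.sum_congr rfl (fun s _ => inner s)]
  rw [sum_count' k (fun p => ∑ q ∈ range (k+1), (k.choose q : ℝ) * F ((2*(p:ℝ) - k)/k, (2*(q:ℝ) - k)/k))]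
  apply Finset.sum_congr rfl
  intro p _
  rw [Finset.mul_sum]
  apply Finset.sum_congr rfl
  intro q _
  ring

/-- tail indicator -/
def chiEps (ε : ℝ) (m : ℝ × ℝ) : ℝ := if ε ≤ |m.1| ∨ ε ≤ |m.2| then 1 else 0

lemma chiEps_nonneg (ε : ℝ) (m : ℝ × ℝ) : 0 ≤ chiEps ε m := by
  unfold chiEps; split <;> norm_num

lemma neg_beta_Hcw (a β : ℝ) (k : ℕ) (σ : Fin (2*k) → Bool) :
    -β * Hcw a (2*k) σ = β * (k:ℝ) * Ebil a (mag (2*k) σ) := by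
  unfold Hcw
  push_cast
  ring

lemma mIcc {k p : ℕ} (hk : 1 ≤ k) (hp : p ≤ k) :
    (2*(p:ℝ) - k)/k ∈ Set.Icc (-1:ℝ) 1 := by
  have hkR : (0:ℝ) < k := by exact_mod_cast hk
  have hpR : (0:ℝ) ≤ p := by positivity
  have hpk : (p:ℝ) ≤ k := by exact_mod_cast hp
  constructor
  · rw [le_div_iff₀ hkR]; linarith
  · rw [div_le_one hkR]; linarith

lemma Ebil_le {a : ℝ} (ha : 0 < a) (m : ℝ × ℝ) :
    Ebil a m ≤ (1+a) * (m.1^2 + m.2^2) / 4 := by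
  unfold Ebil
  nlinarith [sq_nonneg (m.1 - m.2), sq_nonneg (m.1 + m.2)]

/-- Per-site exponent bound off-tail. -/
lemma gsite_le {c δ₀ m : ℝ} (hm : m ∈ Set.Icc (-1:ℝ) 1) (hδ0 : 0 ≤ δ₀)
    (hc : c ≤ 1/2 + δ₀) :
    c * m^2 - (entI m + Real.log 2) ≤ 3*δ₀^2 := by
  have h := entI_quartic hm
  nlinarith [sq_nonneg (m^2 - 6*δ₀), sq_nonneg m]

/-- Per-site exponent bound on tail. -/
lemma gsite_tail {c δ₀ m ε : ℝ} (hm : m ∈ Set.Icc (-1:ℝ) 1) (hδ0 : 0 ≤ δ₀)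
    (hc : c ≤ 1/2 + δ₀) (hδ : δ₀ ≤ ε^2/24) (hε : 0 < ε) (htail : ε ≤ |m|) :
    c * m^2 - (entI m + Real.log 2) ≤ -ε^4/24 := by
  have h := entI_quartic hm
  have hm2 : ε^2 ≤ m^2 := by
    have := abs_nonneg m
    nlinarith [sq_abs m]
  nlinarith [sq_nonneg m, sq_nonneg ε, mul_le_mul_of_nonneg_left hm2 (le_of_lt hε),
    mul_le_mul_of_nonneg_left hm2 (sq_nonneg ε)]

/-- Single weight bound on the tail region. -/
lemma weight_tail_le {k p q : ℕ} (hk : 1 ≤ k) (hp : p ≤ k) (hq : q ≤ k)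
    {a β ε δ₀ : ℝ} (ha : 0 < a) (hb : 0 < β) (hε : 0 < ε)
    (hc : β*(1+a)/4 ≤ 1/2 + δ₀) (hδ0 : 0 ≤ δ₀) (hδ : δ₀ ≤ ε^2/24)
    (htail : ε ≤ |(2*(p:ℝ) - k)/k| ∨ ε ≤ |(2*(q:ℝ) - k)/k|) :
    (k.choose p : ℝ) * (k.choose q : ℝ) *
      Real.exp (β * (k:ℝ) * Ebil a ((2*(p:ℝ) - k)/k, (2*(q:ℝ) - k)/k))
    ≤ (4:ℝ)^k * Real.exp (-(k:ℝ)*(ε^4/48)) := by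
  set m1 : ℝ := (2*(p:ℝ) - k)/k
  set m2 : ℝ := (2*(q:ℝ) - k)/k
  have hm1 : m1 ∈ Set.Icc (-1:ℝ) 1 := mIcc hk hp
  have hm2 : m2 ∈ Set.Icc (-1:ℝ) 1 := mIcc hk hq
  set c : ℝ := β*(1+a)/4
  have hkR : (0:ℝ) ≤ k := by positivity
  -- exponential bound on weight
  have h1 := choose_le_exp_entI k p hp
  have h2 := choose_le_exp_entI k q hq
  have hE : β * (k:ℝ) * Ebil a (m1, m2) ≤ (k:ℝ) * (c * m1^2 + c * m2^2) := by
    have := Ebil_le ha (m1, m2)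
    have hEb : Ebil a (m1, m2) ≤ (1+a) * (m1^2 + m2^2)/4 := this
    calc β * (k:ℝ) * Ebil a (m1, m2) ≤ β * (k:ℝ) * ((1+a) * (m1^2 + m2^2)/4) := by
          apply mul_le_mul_of_nonneg_left hEb (by positivity)
    _ = (k:ℝ) * (c * m1^2 + c * m2^2) := by rw [show c = β*(1+a)/4 from rfl]; ring
  have hchoose : (k.choose p : ℝ) * (k.choose q : ℝ) ≤
      Real.exp (-(k:ℝ) * entI m1 + -(k:ℝ) * entI m2) := by
    rw [Real.exp_add]
    exact mul_le_mul h1 h2 (by positivity) (Real.exp_nonneg _)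
  have hw : (k.choose p : ℝ) * (k.choose q : ℝ) * Real.exp (β * (k:ℝ) * Ebil a (m1, m2))
      ≤ Real.exp (-(k:ℝ) * entI m1 + -(k:ℝ) * entI m2 + (k:ℝ) * (c * m1^2 + c * m2^2)) := by
    rw [Real.exp_add]
    exact mul_le_mul hchoose (Real.exp_le_exp.2 hE) (Real.exp_nonneg _) (Real.exp_nonneg _)
  refine le_trans hw ?_
  have h4 : (4:ℝ)^k = Real.exp ((k:ℝ) * (2 * Real.log 2)) := by
    rw [show (2:ℝ) * Real.log 2 = Real.log 4 by
      rw [show (4:ℝ) = 2^2 by norm_num, Real.log_pow]; push_cast; ring]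
    rw [Real.exp_nat_mul, Real.exp_log (by norm_num)]
  rw [h4, ← Real.exp_add, Real.exp_le_exp]
  -- exponent inequality
  have key : (c * m1^2 - (entI m1 + Real.log 2)) + (c * m2^2 - (entI m2 + Real.log 2))
      ≤ -(ε^4/48) := by
    rcases htail with h | h
    · have t1 := gsite_tail hm1 hδ0 hc hδ hε h
      have t2 := gsite_le hm2 hδ0 hc
      nlinarith [sq_nonneg ε, pow_le_pow_left₀ hδ0 hδ 2]
    · have t1 := gsite_tail hm2 hδ0 hc hδ hε h
      have t2 := gsite_le hm1 hδ0 hc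
      nlinarith [sq_nonneg ε, pow_le_pow_left₀ hδ0 hδ 2]
  have := mul_le_mul_of_nonneg_left key hkR
  nlinarith [this]

/-- Tail sum bound. -/
lemma tail_le (k : ℕ) (hk : 1 ≤ k) {a β ε δ₀ : ℝ} (ha : 0 < a) (hb : 0 < β) (hε : 0 < ε)
    (hc : β*(1+a)/4 ≤ 1/2 + δ₀) (hδ0 : 0 ≤ δ₀) (hδ : δ₀ ≤ ε^2/24) :
    ∑ σ : Fin (2*k) → Bool, Real.exp (-β * Hcw a (2*k) σ) * chiEps ε (mag (2*k) σ)
      ≤ ((k:ℝ)+1)^2 * 4^k * Real.exp (-(k:ℝ)*(ε^4/48)) := by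
  have hrw : ∀ σ : Fin (2*k) → Bool,
      Real.exp (-β * Hcw a (2*k) σ) * chiEps ε (mag (2*k) σ)
      = (fun m => Real.exp (β * (k:ℝ) * Ebil a m) * chiEps ε m) (mag (2*k) σ) := by
    intro σ; simp only; rw [neg_beta_Hcw]
  rw [Finset.sum_congr rfl (fun σ _ => hrw σ),
    master k (fun m => Real.exp (β * (k:ℝ) * Ebil a m) * chiEps ε m)]
  have hbound : ∀ p ∈ range (k+1), ∀ q ∈ range (k+1),
      (k.choose p : ℝ) * (k.choose q : ℝ) *
        (Real.exp (β * (k:ℝ) * Ebil a ((2*(p:ℝ) - k)/k, (2*(q:ℝ) - k)/k)) *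
          chiEps ε ((2*(p:ℝ) - k)/k, (2*(q:ℝ) - k)/k))
      ≤ (4:ℝ)^k * Real.exp (-(k:ℝ)*(ε^4/48)) := by
    intro p hp q hq
    rw [mem_range, Nat.lt_succ_iff] at hp hq
    unfold chiEps
    split
    · rename_i htail
      rw [mul_one]
      exact weight_tail_le hk hp hq ha hb hε hc hδ0 hδ htail
    · rw [mul_zero, mul_zero]
      positivity
  calc ∑ p ∈ range (k+1), ∑ q ∈ range (k+1), (k.choose p : ℝ) * (k.choose q : ℝ) *
        (Real.exp (β * (k:ℝ) * Ebil a ((2*(p:ℝ) - k)/k, (2*(q:ℝ) - k)/k)) *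
          chiEps ε ((2*(p:ℝ) - k)/k, (2*(q:ℝ) - k)/k))
      ≤ ∑ p ∈ range (k+1), ∑ q ∈ range (k+1), (4:ℝ)^k * Real.exp (-(k:ℝ)*(ε^4/48)) := by
        apply Finset.sum_le_sum
        intro p hp
        apply Finset.sum_le_sum
        intro q hq
        exact hbound p hp q hq
  _ = ((k:ℝ)+1)^2 * 4^k * Real.exp (-(k:ℝ)*(ε^4/48)) := by
        rw [Finset.sum_const, Finset.sum_const, card_range, nsmul_eq_mul, nsmul_eq_mul]
        push_cast
        ring

/-- Partition function lower bound. -/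
lemma Z_ge (k : ℕ) (hk : 1 ≤ k) {a β : ℝ} (ha : 0 < a) (hb : 0 < β) :
    (4:ℝ)^k / ((k:ℝ)+1)^2 ≤ Zcw a β (2*k) := by
  have hrw : ∀ σ : Fin (2*k) → Bool,
      Real.exp (-β * Hcw a (2*k) σ)
      = (fun m => Real.exp (β * (k:ℝ) * Ebil a m)) (mag (2*k) σ) := by
    intro σ; simp only; rw [neg_beta_Hcw]
  unfold Zcw
  rw [Finset.sum_congr rfl (fun σ _ => hrw σ),
    master k (fun m => Real.exp (β * (k:ℝ) * Ebil a m))]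
  set f : ℕ → ℕ → ℝ := fun p q => (k.choose p : ℝ) * (k.choose q : ℝ) *
      Real.exp (β * (k:ℝ) * Ebil a ((2*(p:ℝ) - k)/k, (2*(q:ℝ) - k)/k)) with hf
  have hnonneg : ∀ p q, 0 ≤ f p q := by intro p q; rw [hf]; positivity
  have hmem : k/2 ∈ range (k+1) := mem_range.2 (by omega)
  have hstep1 : f (k/2) (k/2) ≤ ∑ q ∈ range (k+1), f (k/2) q :=
    Finset.single_le_sum (fun q _ => hnonneg _ q) hmem
  have hstep2 : ∑ q ∈ range (k+1), f (k/2) q ≤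
      ∑ p ∈ range (k+1), ∑ q ∈ range (k+1), f p q :=
    Finset.single_le_sum (f := fun p => ∑ q ∈ range (k+1), f p q)
      (fun p _ => Finset.sum_nonneg (fun q _ => hnonneg p q)) hmem
  have hterm : (4:ℝ)^k / ((k:ℝ)+1)^2 ≤ f (k/2) (k/2) := by
    rw [hf]
    set m0 : ℝ := (2*((k/2 : ℕ):ℝ) - k)/k with hm0
    have hEpos : 0 ≤ Ebil a (m0, m0) := by
      unfold Ebil
      simp only
      nlinarith [sq_nonneg m0, ha.le]
    have hexp : (1:ℝ) ≤ Real.exp (β * (k:ℝ) * Ebil a (m0, m0)) := by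
      rw [← Real.exp_zero]
      apply Real.exp_le_exp.2
      positivity
    have hch : (2:ℝ)^k / ((k:ℝ)+1) ≤ (k.choose (k/2) : ℝ) := by
      have hsum : ∑ i ∈ range (k+1), k.choose i = 2^k := Nat.sum_range_choose k
      have hle : (2:ℕ)^k ≤ (k+1) * k.choose (k/2) := by
        calc (2:ℕ)^k = ∑ i ∈ range (k+1), k.choose i := hsum.symm
        _ ≤ ∑ i ∈ range (k+1), k.choose (k/2) :=
            Finset.sum_le_sum (fun i _ => Nat.choose_le_middle i k)
        _ = (k+1) * k.choose (k/2) := by rw [Finset.sum_const, card_range, smul_eq_mul]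
      have hleR : (2:ℝ)^k ≤ ((k:ℝ)+1) * (k.choose (k/2) : ℝ) := by exact_mod_cast hle
      rw [div_le_iff₀ (by positivity)]
      linarith
    have hchnn : (0:ℝ) ≤ (2:ℝ)^k / ((k:ℝ)+1) := by positivity
    calc (4:ℝ)^k / ((k:ℝ)+1)^2 = ((2:ℝ)^k / ((k:ℝ)+1)) * ((2:ℝ)^k / ((k:ℝ)+1)) := by
          rw [show (4:ℝ) = 2*2 by norm_num, mul_pow]
          field_simp
    _ ≤ (k.choose (k/2) : ℝ) * (k.choose (k/2) : ℝ) := mul_le_mul hch hch hchnn (by positivity)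
    _ ≤ (k.choose (k/2) : ℝ) * (k.choose (k/2) : ℝ) *
          Real.exp (β * (k:ℝ) * Ebil a (m0, m0)) :=
        le_mul_of_one_le_right (by positivity) hexp
  linarith

lemma decay {γ : ℝ} (hγ : 0 < γ) :
    Tendsto (fun k : ℕ => ((k:ℝ)+1)^4 * Real.exp (-(k:ℝ)*γ)) atTop (nhds 0) := by
  have hcomp : Tendsto (fun k : ℕ => γ*((k:ℝ)+1)) atTop atTop := by
    apply Filter.Tendsto.const_mul_atTop hγ
    exact tendsto_atTop_add_const_right _ 1 tendsto_natCast_atTop_atTop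
  have h0 := (Real.tendsto_pow_mul_exp_neg_atTop_nhds_zero 4).comp hcomp
  have heq : (fun k : ℕ => ((k:ℝ)+1)^4 * Real.exp (-(k:ℝ)*γ))
      = fun k : ℕ => (Real.exp γ / γ^4) *
          ((γ*((k:ℝ)+1))^4 * Real.exp (-(γ*((k:ℝ)+1)))) := by
    funext k
    rw [show -(γ*((k:ℝ)+1)) = -(k:ℝ)*γ + (-γ) by ring, Real.exp_add]
    rw [Real.exp_neg]
    field_simp [Real.exp_ne_zero]
  rw [heq]
  simpa using h0.const_mul (Real.exp γ / γ^4)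


/-- bipartite Curie–Weiss, subcritical regime `β ≤ 2/(1+α̂)`: the law of the
magnetization converges weakly to the Dirac mass at `(0,0)`. -/
theorem cw_magnetization_subcritical
    (α : ℕ → ℝ) (hatα β : ℝ)
    (hα : ∀ n, 0 < α n) (hαlim : Tendsto α atTop (nhds hatα))
    (hhatα : hatα ∈ Set.Icc (0 : ℝ) 1)
    (hβpos : 0 < β) (hβ : β ≤ 2 / (1 + hatα)) :
    ∀ φ : BoundedContinuousFunction (ℝ × ℝ) ℝ,
      Tendsto (fun k : ℕ => cwExpect (α (2 * k)) β (2 * k) (fun m => φ m))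
        atTop (nhds (φ (0, 0))) := by
  intro φ
  rw [Metric.tendsto_atTop]
  intro η hη
  -- continuity of φ at the origin
  have hcont : ContinuousAt (fun m => φ m) ((0:ℝ), (0:ℝ)) := φ.continuous.continuousAt
  rw [Metric.continuousAt_iff] at hcont
  obtain ⟨ε, hε, hball⟩ := hcont (η/2) (by linarith)
  set δ₀ : ℝ := ε^2/24 with hδ₀
  have hδ₀pos : 0 < δ₀ := by rw [hδ₀]; positivity
  set γ : ℝ := ε^4/48 with hγdef
  have hγpos : 0 < γ := by rw [hγdef]; positivity
  set M : ℝ := 2*‖φ‖ with hM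
  have hMnn : 0 ≤ M := by rw [hM]; positivity
  -- critical exponent is at most 1/2
  have hhat1 : (0:ℝ) < 1 + hatα := by linarith [hhatα.1]
  have hchalf : β*(1+hatα)/4 ≤ 1/2 := by
    rw [le_div_iff₀ hhat1] at hβ
    linarith
  -- α (2 k) along even indices
  have h2k : Tendsto (fun k : ℕ => 2*k) atTop atTop := by
    apply Filter.tendsto_atTop_atTop.2
    exact fun b => ⟨b, fun c hc => by omega⟩
  have halim : Tendsto (fun k => α (2*k)) atTop (nhds hatα) := hαlim.comp h2k
  have hclim : Tendsto (fun k => β*(1+α (2*k))/4) atTop (nhds (β*(1+hatα)/4)) := by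
    exact (((tendsto_const_nhds.add halim).const_mul β).div_const 4)
  have hev1 : ∀ᶠ k in atTop, β*(1+α (2*k))/4 < 1/2 + δ₀ :=
    Filter.Tendsto.eventually_lt_const (by linarith : β*(1+hatα)/4 < 1/2 + δ₀) hclim
  have hdecay := (decay hγpos).const_mul M
  rw [mul_zero] at hdecay
  have hev2 : ∀ᶠ k : ℕ in atTop, M * (((k:ℝ)+1)^4 * Real.exp (-(k:ℝ)*γ)) < η/2 :=
    Filter.Tendsto.eventually_lt_const (by linarith : (0:ℝ) < η/2) hdecay
  have hev : ∀ᶠ k : ℕ in atTop, (β*(1+α (2*k))/4 < 1/2 + δ₀ ∧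
      M * (((k:ℝ)+1)^4 * Real.exp (-(k:ℝ)*γ)) < η/2) ∧ 1 ≤ k :=
    (hev1.and hev2).and (eventually_ge_atTop 1)
  obtain ⟨N, hN⟩ := eventually_atTop.1 hev
  refine ⟨N, fun k hk => ?_⟩
  obtain ⟨⟨hck, hBk⟩, hk1⟩ := hN k hk
  -- the main estimate for a fixed k
  set a : ℝ := α (2*k) with ha'
  have ha : 0 < a := hα _
  set n := 2*k with hn
  set w : (Fin n → Bool) → ℝ := fun σ => Real.exp (-β * Hcw a n σ) with hw
  have hwpos : ∀ σ, 0 < w σ := fun σ => Real.exp_pos _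
  have hZ : Zcw a β n = ∑ σ : Fin n → Bool, w σ := rfl
  have hZpos : 0 < Zcw a β n := by
    rw [hZ]
    exact Finset.sum_pos (fun σ _ => hwpos σ) Finset.univ_nonempty
  set T : ℝ := ∑ σ : Fin n → Bool, w σ * chiEps ε (mag n σ) with hT
  have hTnn : 0 ≤ T :=
    Finset.sum_nonneg (fun σ _ => mul_nonneg (hwpos σ).le (chiEps_nonneg _ _))
  -- pointwise bound
  have hpoint : ∀ σ : Fin n → Bool,
      |φ (mag n σ) - φ (0, 0)| ≤ η/2 + M * chiEps ε (mag n σ) := by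
    intro σ
    unfold chiEps
    split
    · rw [mul_one]
      have hd : dist (φ (mag n σ)) (φ (0, 0)) ≤ M := by
        rw [hM]
        exact φ.dist_le_two_norm _ _
      rw [Real.dist_eq] at hd
      linarith
    · rename_i h
      push_neg at h
      obtain ⟨h1, h2⟩ := h
      have hd : dist (mag n σ) ((0:ℝ), (0:ℝ)) < ε := by
        rw [Prod.dist_eq]
        apply max_lt <;> rw [Real.dist_eq] <;> simpa
      have := hball hd
      rw [Real.dist_eq] at this
      rw [mul_zero]
      linarith
  -- numerator bound
  have hnum : |∑ σ : Fin n → Bool, w σ * (φ (mag n σ) - φ (0, 0))|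
      ≤ (η/2) * Zcw a β n + M * T := by
    calc |∑ σ : Fin n → Bool, w σ * (φ (mag n σ) - φ (0, 0))|
        ≤ ∑ σ : Fin n → Bool, |w σ * (φ (mag n σ) - φ (0, 0))| :=
          Finset.abs_sum_le_sum_abs _ _
      _ ≤ ∑ σ : Fin n → Bool, w σ * (η/2 + M * chiEps ε (mag n σ)) := by
          apply Finset.sum_le_sum
          intro σ _
          rw [abs_mul, abs_of_pos (hwpos σ)]
          exact mul_le_mul_of_nonneg_left (hpoint σ) (hwpos σ).le
      _ = (η/2) * Zcw a β n + M * T := by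
          rw [hZ, hT, Finset.mul_sum, Finset.mul_sum, ← Finset.sum_add_distrib]
          apply Finset.sum_congr rfl
          intro σ _
          ring
  -- difference representation
  have hdiff : cwExpect a β n (fun m => φ m) - φ (0, 0)
      = (∑ σ : Fin n → Bool, w σ * (φ (mag n σ) - φ (0, 0))) / Zcw a β n := by
    unfold cwExpect
    rw [div_sub' (ne_of_gt hZpos)]
    congr 1
    rw [hZ, Finset.sum_mul, ← Finset.sum_sub_distrib]
    apply Finset.sum_congr rfl
    intro σ _
    ring
  -- ratio bound
  have hTle : T ≤ ((k:ℝ)+1)^2 * 4^k * Real.exp (-(k:ℝ)*γ) := by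
    have := tail_le k hk1 ha hβpos hε (le_of_lt hck) hδ₀pos.le hδ₀.le
    rw [hγdef]
    exact this
  have hZge : (4:ℝ)^k / ((k:ℝ)+1)^2 ≤ Zcw a β n := Z_ge k hk1 ha hβpos
  have hZL : (0:ℝ) < (4:ℝ)^k / ((k:ℝ)+1)^2 := by positivity
  have hTZ : T / Zcw a β n ≤ ((k:ℝ)+1)^4 * Real.exp (-(k:ℝ)*γ) := by
    have hdd := div_le_div₀ (by positivity) hTle hZL hZge
    refine le_trans hdd (le_of_eq ?_)
    have h4 : ((4:ℝ)^k) ≠ 0 := by positivity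
    have hk1R : ((k:ℝ)+1) ≠ 0 := by positivity
    field_simp
  -- conclusion
  rw [Real.dist_eq, hdiff, abs_div, abs_of_pos hZpos]
  have hfrac : |∑ σ : Fin n → Bool, w σ * (φ (mag n σ) - φ (0, 0))| / Zcw a β n
      ≤ η/2 + M * (T / Zcw a β n) := by
    rw [div_le_iff₀ hZpos]
    have : (η/2 + M * (T / Zcw a β n)) * Zcw a β n = (η/2) * Zcw a β n + M * T := by
      field_simp
    rw [this]
    exact hnum
  have hlast : M * (T / Zcw a β n) ≤ M * (((k:ℝ)+1)^4 * Real.exp (-(k:ℝ)*γ)) :=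
    mul_le_mul_of_nonneg_left hTZ hMnn
  calc |∑ σ : Fin n → Bool, w σ * (φ (mag n σ) - φ (0, 0))| / Zcw a β n
      ≤ η/2 + M * (T / Zcw a β n) := hfrac
    _ ≤ η/2 + M * (((k:ℝ)+1)^4 * Real.exp (-(k:ℝ)*γ)) := by linarith
    _ < η := by linarith

end
end

section
/- Free energy of the bipartite Curie–Weiss model: let α_n ∈ [0,1] with α_n → α̂ ∈ [0,1] and β > 0. Then lim_{n→∞, n even} (1/(nβ)) log Z̄_{n,β} = (1/(2β)) sup_{m∈[−1,1]²} G_{α̂,β}(m). -/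
open MeasureTheory Finset Filter

noncomputable section

namespace CWaux


def cnt (k : ℕ) (τ : Fin k → Bool) : ℕ := (Finset.univ.filter fun i => τ i = true).card

lemma cnt_le (k : ℕ) (τ : Fin k → Bool) : cnt k τ ≤ k := by
  classical
  calc cnt k τ ≤ (Finset.univ : Finset (Fin k)).card := Finset.card_filter_le _ _
    _ = k := by simp

lemma card_fiber (k j : ℕ) :
    ((Finset.univ : Finset (Fin k → Bool)).filter fun τ => cnt k τ = j).card = k.choose j := by
  classical
  have hcp := Finset.card_powersetCard j (Finset.univ : Finset (Fin k))
  rw [Finset.card_univ, Fintype.card_fin] at hcp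
  rw [← hcp]
  apply Finset.card_bij (fun τ _ => Finset.univ.filter fun i => τ i = true)
  · intro τ hτ
    simp only [Finset.mem_powersetCard]
    exact ⟨Finset.filter_subset _ _ |>.trans (by simp), (Finset.mem_filter.mp hτ).2⟩
  · intro τ1 h1 τ2 h2 heq
    funext i
    have := Finset.ext_iff.mp heq i
    simp only [Finset.mem_filter, Finset.mem_univ, true_and] at this
    cases h1' : τ1 i <;> cases h2' : τ2 i <;> simp [h1', h2'] at this ⊢
  · intro s hs
    refine ⟨fun i => decide (i ∈ s), ?_, ?_⟩
    · simp only [Finset.mem_filter, Finset.mem_univ, true_and, cnt]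
      rw [Finset.mem_powersetCard] at hs
      convert hs.2 using 2
      exact iff_of_true (Finset.mem_filter.mpr ⟨Finset.mem_univ _, by simpa [cnt] using hs.2⟩) hs.2
    · ext i; simp

lemma sum_count (k : ℕ) (g : ℕ → ℝ) :
    ∑ τ : Fin k → Bool, g (cnt k τ) =
      ∑ j ∈ Finset.range (k+1), (k.choose j : ℝ) * g j := by
  classical
  rw [← Finset.sum_fiberwise_of_maps_to
      (g := fun τ : Fin k → Bool => cnt k τ) (t := Finset.range (k+1))
      (fun τ _ => Finset.mem_range.mpr (Nat.lt_succ_of_le (cnt_le k τ)))]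
  refine Finset.sum_congr rfl fun j hj => ?_
  rw [Finset.sum_congr rfl (fun τ hτ => by rw [(Finset.mem_filter.mp hτ).2]),
    Finset.sum_const, card_fiber]
  simp [nsmul_eq_mul]

lemma spin_sum (k : ℕ) (τ : Fin k → Bool) :
    ∑ i : Fin k, spin (τ i) = 2 * (cnt k τ : ℝ) - k := by
  classical
  have h : ∀ b, spin b = 2 * (if b = true then (1:ℝ) else 0) - 1 := by
    intro b; cases b <;> norm_num [spin]
  simp_rw [h, Finset.sum_sub_distrib, ← Finset.mul_sum]
  rw [Finset.sum_boole]
  simp [cnt]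



/-- grid point -/
def xg (k j : ℕ) : ℝ := (2 * j - k) / k

def E1 (k : ℕ) : (Fin (2*k) → Bool) ≃ ((Fin k → Bool) × (Fin k → Bool)) :=
  ((finCongr (two_mul k)).arrowCongr (Equiv.refl Bool)).trans
    ((((finSumFinEquiv (m := k) (n := k)).symm).arrowCongr (Equiv.refl Bool)).trans
      (Equiv.sumArrowEquivProdArrow _ _ _))

lemma mag_decomp (k : ℕ) (hk : 0 < k) (σ : Fin (2*k) → Bool) :
    mag (2*k) σ = (xg k (cnt k fun i => σ (Fin.cast (two_mul k).symm (Fin.castAdd k i))),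
                   xg k (cnt k fun i => σ (Fin.cast (two_mul k).symm (Fin.natAdd k i)))) := by
  have hdiv : (2*k)/2 = k := by omega
  have hsum1 : ∑ j : Fin (2*k), (if (j : ℕ) < (2*k)/2 then spin (σ j) else 0)
      = ∑ i : Fin k, spin (σ (Fin.cast (two_mul k).symm (Fin.castAdd k i))) := by
    rw [← Equiv.sum_comp (finCongr (two_mul k)).symm
      (fun j : Fin (2*k) => if (j : ℕ) < (2*k)/2 then spin (σ j) else 0), Fin.sum_univ_add]
    simp only [finCongr_symm, finCongr_apply, Fin.coe_cast, Fin.coe_castAdd, Fin.coe_natAdd, hdiv]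
    rw [Finset.sum_congr rfl (fun (i : Fin k) _ => if_pos i.isLt),
      Finset.sum_congr rfl (fun (i : Fin k) _ =>
        if_neg (Nat.not_lt.mpr (Nat.le_add_right k i)))]
    simp
  have hsum2 : ∑ j : Fin (2*k), (if (2*k)/2 ≤ (j : ℕ) then spin (σ j) else 0)
      = ∑ i : Fin k, spin (σ (Fin.cast (two_mul k).symm (Fin.natAdd k i))) := by
    rw [← Equiv.sum_comp (finCongr (two_mul k)).symm
      (fun j : Fin (2*k) => if (2*k)/2 ≤ (j : ℕ) then spin (σ j) else 0), Fin.sum_univ_add]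
    simp only [finCongr_symm, finCongr_apply, Fin.coe_cast, Fin.coe_castAdd, Fin.coe_natAdd, hdiv]
    rw [Finset.sum_congr rfl (fun (i : Fin k) _ => if_neg (Nat.not_le.mpr i.isLt)),
      Finset.sum_congr rfl (fun (i : Fin k) _ => if_pos (Nat.le_add_right k i))]
    simp
  unfold mag
  rw [hsum1, hsum2, spin_sum, spin_sum]
  have hk' : (k:ℝ) ≠ 0 := Nat.cast_ne_zero.mpr hk.ne'
  rw [Prod.mk.injEq]
  refine ⟨?_, ?_⟩ <;>
  · show (2 / ((2*k : ℕ) : ℝ)) * _ = xg k _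
    unfold xg
    push_cast
    field_simp

lemma hE1 (k : ℕ) (p : (Fin k → Bool) × (Fin k → Bool)) :
    ((fun i => (E1 k).symm p (Fin.cast (two_mul k).symm (Fin.castAdd k i))) = p.1 ∧
     (fun i => (E1 k).symm p (Fin.cast (two_mul k).symm (Fin.natAdd k i))) = p.2) := by
  constructor
  · funext i
    simp [E1, Equiv.sumArrowEquivProdArrow, Equiv.arrowCongr,
      finSumFinEquiv_symm_apply_castAdd]
  · funext i
    simp only [E1, Equiv.sumArrowEquivProdArrow, Equiv.arrowCongr, Equiv.trans_apply,
      Equiv.symm_trans_apply, Equiv.coe_fn_symm_mk, Equiv.coe_fn_mk, Equiv.coe_refl,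
      Function.comp_apply, finCongr_symm, finCongr_apply, Equiv.refl_symm, Equiv.symm_symm,
      Fin.cast_cast, Fin.cast_eq_self]
    rw [finSumFinEquiv_symm_apply_natAdd]
    rfl

set_option maxHeartbeats 1000000 in
lemma Z_eq (a β : ℝ) (k : ℕ) (hk : 0 < k) :
    Zcw a β (2*k) = ∑ j1 ∈ Finset.range (k+1), ∑ j2 ∈ Finset.range (k+1),
      (k.choose j1 : ℝ) * (k.choose j2 : ℝ) *
        Real.exp (β * k * Ebil a (xg k j1, xg k j2)) := by
  have hexp : ∀ σ : Fin (2*k) → Bool, -β * Hcw a (2*k) σ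
      = β * k * Ebil a (mag (2*k) σ) := by
    intro σ; unfold Hcw; push_cast; ring
  calc Zcw a β (2*k)
      = ∑ σ : Fin (2*k) → Bool, Real.exp (β * k * Ebil a
          (xg k (cnt k fun i => σ (Fin.cast (two_mul k).symm (Fin.castAdd k i))),
           xg k (cnt k fun i => σ (Fin.cast (two_mul k).symm (Fin.natAdd k i))))) :=
        Finset.sum_congr rfl fun σ _ => by rw [hexp σ, mag_decomp k hk σ]
    _ = ∑ p : (Fin k → Bool) × (Fin k → Bool), Real.exp (β * k * Ebil a
          (xg k (cnt k p.1), xg k (cnt k p.2))) := by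
        rw [← Equiv.sum_comp (E1 k).symm (fun σ : Fin (2*k) → Bool =>
          Real.exp (β * k * Ebil a
            (xg k (cnt k fun i => σ (Fin.cast (two_mul k).symm (Fin.castAdd k i))),
             xg k (cnt k fun i => σ (Fin.cast (two_mul k).symm (Fin.natAdd k i))))))]
        exact Finset.sum_congr rfl fun p _ => by rw [(hE1 k p).1, (hE1 k p).2]
    _ = ∑ τ1 : Fin k → Bool, ∑ τ2 : Fin k → Bool, Real.exp (β * k * Ebil a
          (xg k (cnt k τ1), xg k (cnt k τ2))) := by rw [Fintype.sum_prod_type]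
    _ = ∑ τ1 : Fin k → Bool, ∑ j2 ∈ Finset.range (k+1), (k.choose j2 : ℝ) *
          Real.exp (β * k * Ebil a (xg k (cnt k τ1), xg k j2)) :=
        Finset.sum_congr rfl fun τ1 _ => sum_count k
          (fun j2 => Real.exp (β * k * Ebil a (xg k (cnt k τ1), xg k j2)))
    _ = ∑ j2 ∈ Finset.range (k+1), ∑ τ1 : Fin k → Bool, (k.choose j2 : ℝ) *
          Real.exp (β * k * Ebil a (xg k (cnt k τ1), xg k j2)) := by rw [Finset.sum_comm]
    _ = ∑ j2 ∈ Finset.range (k+1), ∑ j1 ∈ Finset.range (k+1), (k.choose j1 : ℝ) *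
          ((k.choose j2 : ℝ) * Real.exp (β * k * Ebil a (xg k j1, xg k j2))) :=
        Finset.sum_congr rfl fun j2 _ => sum_count k
          (fun j1 => (k.choose j2 : ℝ) * Real.exp (β * k * Ebil a (xg k j1, xg k j2)))
    _ = ∑ j1 ∈ Finset.range (k+1), ∑ j2 ∈ Finset.range (k+1),
          (k.choose j1 : ℝ) * (k.choose j2 : ℝ) *
            Real.exp (β * k * Ebil a (xg k j1, xg k j2)) := by
        rw [Finset.sum_comm]
        exact Finset.sum_congr rfl fun j1 _ => Finset.sum_congr rfl fun j2 _ => by ring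



def tnat (k j i : ℕ) : ℕ := k.choose i * j^i * (k-j)^(k-i)

lemma tnat_sum (k j : ℕ) (hj : j ≤ k) :
    ∑ i ∈ Finset.range (k+1), tnat k j i = k^k := by
  have h := add_pow (R := ℕ) j (k - j) k
  rw [Nat.add_sub_cancel' hj] at h
  rw [h]
  exact Finset.sum_congr rfl fun i _ => by unfold tnat; push_cast; ring

lemma tnat_step (k j i : ℕ) (hik : i < k) :
    (i+1) * (k-j) * tnat k j (i+1) = (k-i) * j * tnat k j i := by
  have h1 : k.choose (i+1) * (i+1) = k.choose i * (k - i) := Nat.choose_succ_right_eq k i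
  have h3 : (k-j)^(k-i) = (k-j)^(k-(i+1)) * (k-j) := by
    rw [← pow_succ]; congr 1; omega
  unfold tnat
  calc (i+1)*(k-j)*(k.choose (i+1) * j^(i+1) * (k-j)^(k-(i+1)))
      = (k.choose (i+1)*(i+1)) * (j^(i+1) * ((k-j)^(k-(i+1)) * (k-j))) := by ring
    _ = (k.choose i * (k-i)) * (j^(i+1) * (k-j)^(k-i)) := by rw [h1, ← h3]
    _ = (k-i)*j*(k.choose i * j^i * (k-j)^(k-i)) := by ring

lemma tnat_le_max (k j : ℕ) (hj : j ≤ k) :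
    ∀ i, i ≤ k → tnat k j i ≤ tnat k j j := by
  by_cases hjk' : j = k
  · -- j = k
    subst hjk'
    intro i hi
    rcases Nat.eq_or_lt_of_le hi with heq | hik
    · subst heq; exact le_refl _
    · have h0 : (j-j)^(j-i) = 0 := by
        rw [Nat.sub_self]
        exact zero_pow (by omega)
      unfold tnat
      rw [h0, Nat.mul_zero]
      exact Nat.zero_le _
  have hjk : j < k := lt_of_le_of_ne hj hjk'
  rcases Nat.eq_zero_or_pos j with rfl | hj0
  · -- j = 0
    intro i hi
    rcases Nat.eq_zero_or_pos i with rfl | hi0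
    · exact le_refl _
    · unfold tnat
      rw [zero_pow hi0.ne', Nat.mul_zero, Nat.zero_mul]
      exact Nat.zero_le _
  -- 0 < j < k
  have hup : ∀ i, i < j → tnat k j i ≤ tnat k j (i+1) := by
    intro i hij
    have hik : i < k := lt_trans hij hjk
    have hstep := tnat_step k j i hik
    have hcoef : (i+1) * (k-j) ≤ (k-i) * j := by
      have h1 : (i+1)*(k-j) + (i+1)*j = (i+1)*k := by
        rw [← Nat.mul_add, Nat.sub_add_cancel hj]
      have h2 : (k-i)*j + (i+1)*j = (k+1)*j := by
        rw [← Nat.add_mul]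
        congr 1
        omega
      have h3 : (i+1)*k ≤ (k+1)*j := by
        calc (i+1)*k ≤ j*k := Nat.mul_le_mul_right k hij
          _ ≤ j*k + j := Nat.le_add_right _ _
          _ = (k+1)*j := by ring
      omega
    -- (i+1)(k-j) t(i+1) = (k-i) j t i ≥ (i+1)(k-j) t i
    have hpos : 0 < (i+1) * (k-j) := Nat.mul_pos (Nat.succ_pos i) (by omega)
    have : (i+1)*(k-j) * tnat k j i ≤ (i+1)*(k-j) * tnat k j (i+1) := by
      rw [hstep]
      exact Nat.mul_le_mul_right _ hcoef
    exact Nat.le_of_mul_le_mul_left this hpos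
  have hdown : ∀ i, j ≤ i → i < k → tnat k j (i+1) ≤ tnat k j i := by
    intro i hji hik
    have hstep := tnat_step k j i hik
    have hcoef : (k-i) * j ≤ (i+1) * (k-j) := by
      have h1 : (i+1)*(k-j) + (i+1)*j = (i+1)*k := by
        rw [← Nat.mul_add, Nat.sub_add_cancel hj]
      have h2 : (k-i)*j + (i+1)*j = (k+1)*j := by
        rw [← Nat.add_mul]; congr 1; omega
      have h3 : (k+1)*j ≤ (i+1)*k := by
        calc (k+1)*j = k*j + j := by ring
          _ ≤ k*i + k := Nat.add_le_add (Nat.mul_le_mul_left k hji) hj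
          _ = (i+1)*k := by ring
      omega
    have hpos : 0 < (i+1) * (k-j) := Nat.mul_pos (Nat.succ_pos i) (by omega)
    have : (i+1)*(k-j) * tnat k j (i+1) ≤ (i+1)*(k-j) * tnat k j i := by
      rw [hstep]
      exact Nat.mul_le_mul_right _ hcoef
    exact Nat.le_of_mul_le_mul_left this hpos
  -- combine
  have hupall : ∀ d, tnat k j (j - d) ≤ tnat k j j := by
    intro d
    induction d with
    | zero => simp
    | succ d ih =>
      rcases le_or_gt j d with h | h
      · have heq : j - (d+1) = j - d := by omega
        rw [heq]; exact ih
      · have h1 : j - (d+1) < j := by omega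
        have hstep := hup (j-(d+1)) h1
        have h2 : j - (d+1) + 1 = j - d := by omega
        rw [h2] at hstep
        exact le_trans hstep ih
  have hdownall : ∀ d, j + d ≤ k → tnat k j (j + d) ≤ tnat k j j := by
    intro d
    induction d with
    | zero => intro _; simp
    | succ d ih =>
      intro hdk
      have hstep := hdown (j + d) (Nat.le_add_right _ _) (by omega)
      exact le_trans hstep (ih (by omega))
  intro i hi
  rcases le_or_gt i j with h | h
  · have := hupall (j - i); rwa [Nat.sub_sub_self h] at this
  · have := hdownall (i - j) (by omega); rwa [Nat.add_sub_cancel' h.le] at this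

lemma tnat_le_pow (k j : ℕ) (hj : j ≤ k) : tnat k j j ≤ k^k :=
  tnat_sum k j hj ▸ Finset.single_le_sum (f := fun i => tnat k j i)
    (fun i _ => Nat.zero_le _) (Finset.mem_range.mpr (by omega))

lemma pow_le_tnat (k j : ℕ) (hj : j ≤ k) : k^k ≤ (k+1) * tnat k j j := by
  rw [← tnat_sum k j hj]
  calc ∑ i ∈ Finset.range (k+1), tnat k j i
      ≤ ∑ _i ∈ Finset.range (k+1), tnat k j j :=
        Finset.sum_le_sum fun i hi =>
          tnat_le_max k j hj i (by have := Finset.mem_range.mp hi; omega)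
    _ = (k+1) * tnat k j j := by rw [Finset.sum_const, Finset.card_range, smul_eq_mul]

lemma exp_nat_log (n : ℕ) (p : ℝ) (h : 0 < p ∨ n = 0) :
    Real.exp ((n:ℝ) * Real.log p) = p ^ n := by
  rcases h with hp0 | rfl
  · rw [← Real.exp_log hp0, ← Real.exp_nat_mul, Real.log_exp]
  · simp

lemma exp_entI (k j : ℕ) (hk : 0 < k) (hj : j ≤ k) :
    Real.exp ((k:ℝ) * entI (xg k j)) = ((j:ℝ)^j * ((k-j : ℕ):ℝ)^(k-j)) / (k:ℝ)^k := by
  have hk' : (k:ℝ) ≠ 0 := Nat.cast_ne_zero.mpr hk.ne'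
  have h1 : (1 + xg k j)/2 = (j:ℝ)/k := by unfold xg; field_simp; ring
  have h2 : (1 - xg k j)/2 = ((k-j : ℕ):ℝ)/k := by
    unfold xg; rw [Nat.cast_sub hj]; field_simp; ring
  have hent : (k:ℝ) * entI (xg k j) =
      (j:ℝ) * Real.log ((j:ℝ)/k) + ((k-j:ℕ):ℝ) * Real.log (((k-j:ℕ):ℝ)/k) := by
    unfold entI
    rw [h1, h2, Nat.cast_sub hj]
    field_simp
  have hj1 : (0:ℝ) < (j:ℝ)/k ∨ j = 0 := by
    rcases Nat.eq_zero_or_pos j with rfl | h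
    · right; rfl
    · left; positivity
  have hj2 : (0:ℝ) < ((k-j:ℕ):ℝ)/k ∨ k - j = 0 := by
    rcases Nat.eq_zero_or_pos (k-j) with h | h
    · right; exact h
    · left
      have : (0:ℝ) < ((k-j:ℕ):ℝ) := by exact_mod_cast h
      positivity
  rw [hent, Real.exp_add, exp_nat_log j _ hj1, exp_nat_log (k-j) _ hj2,
    div_pow, div_pow, div_mul_div_comm, ← pow_add, Nat.add_sub_cancel' hj]

lemma choose_exp_eq (k j : ℕ) (hk : 0 < k) (hj : j ≤ k) :
    (k.choose j : ℝ) * Real.exp ((k:ℝ) * entI (xg k j)) = (tnat k j j : ℝ) / (k:ℝ)^k := by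
  rw [exp_entI k j hk hj]
  unfold tnat
  push_cast
  ring

lemma choose_exp_le_one (k j : ℕ) (hk : 0 < k) (hj : j ≤ k) :
    (k.choose j : ℝ) * Real.exp ((k:ℝ) * entI (xg k j)) ≤ 1 := by
  rw [choose_exp_eq k j hk hj, div_le_one (by positivity)]
  exact_mod_cast tnat_le_pow k j hj

lemma one_le_choose_exp (k j : ℕ) (hk : 0 < k) (hj : j ≤ k) :
    1 ≤ ((k:ℝ)+1) * ((k.choose j : ℝ) * Real.exp ((k:ℝ) * entI (xg k j))) := by
  rw [choose_exp_eq k j hk hj]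
  rw [mul_div_assoc', le_div_iff₀ (by positivity), one_mul]
  exact_mod_cast pow_le_tnat k j hj

lemma xg_mem (k j : ℕ) (hk : 0 < k) (hj : j ≤ k) : xg k j ∈ Set.Icc (-1:ℝ) 1 := by
  have hk' : (0:ℝ) < k := Nat.cast_pos.mpr hk
  have hjr : (j:ℝ) ≤ k := Nat.cast_le.mpr hj
  have hj0 : (0:ℝ) ≤ (j:ℝ) := Nat.cast_nonneg j
  unfold xg
  constructor
  · rw [le_div_iff₀ hk']
    nlinarith
  · rw [div_le_iff₀ hk']
    nlinarith



def sq : Set (ℝ × ℝ) := Set.Icc (-1:ℝ) 1 ×ˢ Set.Icc (-1:ℝ) 1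

lemma sq_compact : IsCompact sq := isCompact_Icc.prod isCompact_Icc

lemma sq_nonempty : sq.Nonempty :=
  ⟨(0,0), by constructor <;> constructor <;> norm_num⟩

lemma continuous_entI : Continuous entI := by
  unfold entI
  exact (Real.continuous_mul_log.comp (by continuity)).add
    (Real.continuous_mul_log.comp (by continuity))

lemma continuous_Gfun (a β : ℝ) : Continuous (Gfun a β) := by
  unfold Gfun Ebil
  apply Continuous.sub
  · continuity
  · exact (continuous_entI.comp continuous_fst).add (continuous_entI.comp continuous_snd)

lemma exists_max (a β : ℝ) : ∃ m ∈ sq, ∀ m' ∈ sq, Gfun a β m' ≤ Gfun a β m := by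
  obtain ⟨m, hm, hmax⟩ := sq_compact.exists_isMaxOn sq_nonempty
    (continuous_Gfun a β).continuousOn
  exact ⟨m, hm, fun m' hm' => hmax hm'⟩

lemma sSup_eq (a β : ℝ) (m : ℝ × ℝ) (hm : m ∈ sq)
    (hmax : ∀ m' ∈ sq, Gfun a β m' ≤ Gfun a β m) :
    sSup (Gfun a β '' sq) = Gfun a β m := by
  apply le_antisymm
  · apply csSup_le (sq_nonempty.image _)
    rintro y ⟨x, hx, rfl⟩
    exact hmax x hx
  · exact le_csSup ⟨Gfun a β m, by rintro y ⟨x, hx, rfl⟩; exact hmax x hx⟩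
      ⟨m, hm, rfl⟩

lemma Gfun_diff (a a' β : ℝ) (hβ : 0 ≤ β) (m : ℝ × ℝ) (hm : m ∈ sq) :
    Gfun a β m ≤ Gfun a' β m + β/2 * |a - a'| := by
  obtain ⟨⟨h11, h12⟩, h21, h22⟩ := hm
  unfold Gfun Ebil
  have hb1 : m.1 * m.2 ≤ 1 := by nlinarith
  have hb2 : -1 ≤ m.1 * m.2 := by nlinarith
  rcases abs_cases (a - a') with ⟨habs, hsgn⟩ | ⟨habs, hsgn⟩ <;> rw [habs]
  · nlinarith [mul_nonneg (mul_nonneg hβ hsgn) (by linarith : (0:ℝ) ≤ 1 - m.1*m.2)]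
  · nlinarith [mul_nonneg (mul_nonneg hβ (by linarith : (0:ℝ) ≤ a' - a))
      (by linarith : (0:ℝ) ≤ 1 + m.1*m.2)]

lemma Zcw_pos (a β : ℝ) (n : ℕ) : 0 < Zcw a β n :=
  Finset.sum_pos (fun σ _ => Real.exp_pos _) Finset.univ_nonempty

lemma choose_le_exp (k j : ℕ) (hk : 0 < k) (hj : j ≤ k) :
    (k.choose j : ℝ) ≤ Real.exp (-((k:ℝ) * entI (xg k j))) := by
  have b1 := choose_exp_le_one k j hk hj
  calc (k.choose j : ℝ)
      = (k.choose j : ℝ) * Real.exp ((k:ℝ) * entI (xg k j)) *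
          Real.exp (-((k:ℝ) * entI (xg k j))) := by
        rw [mul_assoc, ← Real.exp_add]; simp
    _ ≤ 1 * Real.exp (-((k:ℝ) * entI (xg k j))) :=
        mul_le_mul_of_nonneg_right b1 (Real.exp_pos _).le
    _ = Real.exp (-((k:ℝ) * entI (xg k j))) := one_mul _

lemma exp_le_choose (k j : ℕ) (hk : 0 < k) (hj : j ≤ k) :
    Real.exp (-((k:ℝ) * entI (xg k j))) / ((k:ℝ)+1) ≤ (k.choose j : ℝ) := by
  rw [div_le_iff₀ (by positivity)]
  have b1 := one_le_choose_exp k j hk hj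
  have hmul : Real.exp (-((k:ℝ) * entI (xg k j))) * Real.exp ((k:ℝ) * entI (xg k j)) = 1 := by
    rw [← Real.exp_add]; simp
  calc Real.exp (-((k:ℝ) * entI (xg k j)))
      = Real.exp (-((k:ℝ) * entI (xg k j))) * 1 := (mul_one _).symm
    _ ≤ Real.exp (-((k:ℝ) * entI (xg k j))) *
        (((k:ℝ)+1) * ((k.choose j : ℝ) * Real.exp ((k:ℝ) * entI (xg k j)))) :=
        mul_le_mul_of_nonneg_left b1 (Real.exp_pos _).le
    _ = (k.choose j : ℝ) * ((k:ℝ)+1) *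
        (Real.exp (-((k:ℝ) * entI (xg k j))) * Real.exp ((k:ℝ) * entI (xg k j))) := by ring
    _ = (k.choose j : ℝ) * ((k:ℝ)+1) := by rw [hmul, mul_one]

lemma exp_G_split (a β : ℝ) (k j1 j2 : ℕ) :
    Real.exp ((k:ℝ) * Gfun a β (xg k j1, xg k j2)) =
      Real.exp (β * k * Ebil a (xg k j1, xg k j2)) *
      (Real.exp (-((k:ℝ) * entI (xg k j1))) * Real.exp (-((k:ℝ) * entI (xg k j2)))) := by
  rw [← Real.exp_add, ← Real.exp_add]
  congr 1
  unfold Gfun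
  ring

lemma term_le (a β : ℝ) (k j1 j2 : ℕ) (hk : 0 < k) (h1 : j1 ≤ k) (h2 : j2 ≤ k) :
    (k.choose j1 : ℝ) * (k.choose j2 : ℝ) * Real.exp (β * k * Ebil a (xg k j1, xg k j2))
      ≤ Real.exp ((k:ℝ) * Gfun a β (xg k j1, xg k j2)) := by
  rw [exp_G_split]
  have c1 := choose_le_exp k j1 hk h1
  have c2 := choose_le_exp k j2 hk h2
  calc (k.choose j1 : ℝ) * (k.choose j2 : ℝ) * Real.exp (β * k * Ebil a (xg k j1, xg k j2))
      ≤ Real.exp (-((k:ℝ) * entI (xg k j1))) * Real.exp (-((k:ℝ) * entI (xg k j2))) *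
          Real.exp (β * k * Ebil a (xg k j1, xg k j2)) := by
        apply mul_le_mul_of_nonneg_right _ (Real.exp_pos _).le
        exact mul_le_mul c1 c2 (Nat.cast_nonneg _) (Real.exp_pos _).le
    _ = _ := mul_comm _ _

lemma le_term (a β : ℝ) (k j1 j2 : ℕ) (hk : 0 < k) (h1 : j1 ≤ k) (h2 : j2 ≤ k) :
    Real.exp ((k:ℝ) * Gfun a β (xg k j1, xg k j2)) / ((k:ℝ)+1)^2
      ≤ (k.choose j1 : ℝ) * (k.choose j2 : ℝ) *
          Real.exp (β * k * Ebil a (xg k j1, xg k j2)) := by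
  rw [exp_G_split]
  have c1 := exp_le_choose k j1 hk h1
  have c2 := exp_le_choose k j2 hk h2
  have heq : Real.exp (β * k * Ebil a (xg k j1, xg k j2)) *
      (Real.exp (-((k:ℝ) * entI (xg k j1))) * Real.exp (-((k:ℝ) * entI (xg k j2)))) / ((k:ℝ)+1)^2
      = (Real.exp (-((k:ℝ) * entI (xg k j1))) / ((k:ℝ)+1)) *
        (Real.exp (-((k:ℝ) * entI (xg k j2))) / ((k:ℝ)+1)) *
        Real.exp (β * k * Ebil a (xg k j1, xg k j2)) := by
    field_simp
  rw [heq]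
  apply mul_le_mul_of_nonneg_right _ (Real.exp_pos _).le
  exact mul_le_mul c1 c2 (by positivity) (Nat.cast_nonneg _)

lemma logZ_le (a β : ℝ) (k : ℕ) (hk : 0 < k) (S : ℝ)
    (hS : ∀ j1 j2 : ℕ, j1 ≤ k → j2 ≤ k → Gfun a β (xg k j1, xg k j2) ≤ S) :
    Real.log (Zcw a β (2*k)) ≤ (k:ℝ) * S + 2 * Real.log ((k:ℝ)+1) := by
  have hZ : Zcw a β (2*k) ≤ ((k:ℝ)+1)^2 * Real.exp ((k:ℝ) * S) := by
    rw [Z_eq a β k hk]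
    calc ∑ j1 ∈ Finset.range (k+1), ∑ j2 ∈ Finset.range (k+1),
          (k.choose j1 : ℝ) * (k.choose j2 : ℝ) *
            Real.exp (β * k * Ebil a (xg k j1, xg k j2))
        ≤ ∑ _j1 ∈ Finset.range (k+1), ∑ _j2 ∈ Finset.range (k+1), Real.exp ((k:ℝ) * S) := by
          refine Finset.sum_le_sum fun j1 hj1 => Finset.sum_le_sum fun j2 hj2 => ?_
          have h1 : j1 ≤ k := by have := Finset.mem_range.mp hj1; omega
          have h2 : j2 ≤ k := by have := Finset.mem_range.mp hj2; omega
          refine le_trans (term_le a β k j1 j2 hk h1 h2) ?_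
          exact Real.exp_le_exp.mpr (mul_le_mul_of_nonneg_left (hS j1 j2 h1 h2)
            (Nat.cast_nonneg k))
      _ = ((k:ℝ)+1)^2 * Real.exp ((k:ℝ) * S) := by
          rw [Finset.sum_const, Finset.sum_const, Finset.card_range, smul_smul,
            nsmul_eq_mul]
          push_cast
          ring
  calc Real.log (Zcw a β (2*k)) ≤ Real.log (((k:ℝ)+1)^2 * Real.exp ((k:ℝ) * S)) :=
        Real.log_le_log (Zcw_pos a β _) hZ
    _ = (k:ℝ) * S + 2 * Real.log ((k:ℝ)+1) := by
        rw [Real.log_mul (by positivity) (Real.exp_ne_zero _), Real.log_pow, Real.log_exp]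
        push_cast
        ring

lemma logZ_ge (a β : ℝ) (k j1 j2 : ℕ) (hk : 0 < k) (h1 : j1 ≤ k) (h2 : j2 ≤ k) :
    (k:ℝ) * Gfun a β (xg k j1, xg k j2) - 2 * Real.log ((k:ℝ)+1)
      ≤ Real.log (Zcw a β (2*k)) := by
  have hterm : Real.exp ((k:ℝ) * Gfun a β (xg k j1, xg k j2)) / ((k:ℝ)+1)^2
      ≤ Zcw a β (2*k) := by
    rw [Z_eq a β k hk]
    refine le_trans (le_term a β k j1 j2 hk h1 h2) ?_
    have hnn : ∀ p q : ℕ, 0 ≤ (k.choose p : ℝ) * (k.choose q : ℝ) *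
        Real.exp (β * k * Ebil a (xg k p, xg k q)) := fun p q => by positivity
    calc (k.choose j1 : ℝ) * (k.choose j2 : ℝ) *
          Real.exp (β * k * Ebil a (xg k j1, xg k j2))
        ≤ ∑ j2' ∈ Finset.range (k+1), (k.choose j1 : ℝ) * (k.choose j2' : ℝ) *
            Real.exp (β * k * Ebil a (xg k j1, xg k j2')) :=
          Finset.single_le_sum (fun q _ => hnn j1 q) (Finset.mem_range.mpr (by omega))
      _ ≤ ∑ j1' ∈ Finset.range (k+1), ∑ j2' ∈ Finset.range (k+1),
            (k.choose j1' : ℝ) * (k.choose j2' : ℝ) *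
              Real.exp (β * k * Ebil a (xg k j1', xg k j2')) :=
          Finset.single_le_sum
            (f := fun p => ∑ j2' ∈ Finset.range (k+1), (k.choose p : ℝ) * (k.choose j2' : ℝ) *
              Real.exp (β * k * Ebil a (xg k p, xg k j2')))
            (fun p _ => Finset.sum_nonneg fun q _ => hnn p q)
            (Finset.mem_range.mpr (by omega))
  calc (k:ℝ) * Gfun a β (xg k j1, xg k j2) - 2 * Real.log ((k:ℝ)+1)
      = Real.log (Real.exp ((k:ℝ) * Gfun a β (xg k j1, xg k j2)) / ((k:ℝ)+1)^2) := by
        rw [Real.log_div (Real.exp_ne_zero _) (by positivity), Real.log_exp, Real.log_pow]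
        push_cast
        ring
    _ ≤ Real.log (Zcw a β (2*k)) := Real.log_le_log (by positivity) hterm

def gridj (k : ℕ) (x : ℝ) : ℕ := min k ⌊(k * (1+x))/2⌋₊

lemma gridj_le (k : ℕ) (x : ℝ) : gridj k x ≤ k := min_le_left _ _

lemma xg_gridj_close (k : ℕ) (hk : 0 < k) (x : ℝ) (hx : x ∈ Set.Icc (-1:ℝ) 1) :
    |xg k (gridj k x) - x| ≤ 2 / k := by
  obtain ⟨hx1, hx2⟩ := hx
  have hk' : (0:ℝ) < k := Nat.cast_pos.mpr hk
  set t : ℝ := ((k:ℝ) * (1+x))/2 with ht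
  have ht0 : 0 ≤ t := div_nonneg (mul_nonneg hk'.le (by linarith)) (by norm_num)
  have htk : t ≤ (k:ℝ) := by
    have h := mul_le_mul_of_nonneg_left (show 1 + x ≤ 2 by linarith) hk'.le
    rw [ht]
    linarith
  have hfl : ⌊t⌋₊ ≤ k := by
    have h1 : (⌊t⌋₊ : ℝ) ≤ t := Nat.floor_le ht0
    exact_mod_cast h1.trans htk
  have hg : gridj k x = ⌊t⌋₊ := min_eq_right hfl
  have h1 : (⌊t⌋₊ : ℝ) ≤ t := Nat.floor_le ht0
  have h2 : t < ⌊t⌋₊ + 1 := Nat.lt_floor_add_one t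
  have key : xg k ⌊t⌋₊ - x = 2*((⌊t⌋₊:ℝ) - t)/k := by
    unfold xg
    rw [ht]
    field_simp
    ring
  rw [hg, key, abs_div, abs_of_pos hk']
  gcongr
  rw [abs_le]
  constructor <;> linarith

end CWaux

/-- free energy of the bipartite Curie–Weiss model:
`(1/(nβ)) log Z̄_{n,β} → (1/(2β)) sup_{m ∈ [−1,1]²} G_{α̂,β}(m)` along even `n`. -/
theorem cw_free_energy
    (α : ℕ → ℝ) (hatα β : ℝ)
    (hα : ∀ n, α n ∈ Set.Icc (0 : ℝ) 1) (hαlim : Tendsto α atTop (nhds hatα))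
    (hhatα : hatα ∈ Set.Icc (0 : ℝ) 1) (hβ : 0 < β) :
    Tendsto (fun k : ℕ => (1 / ((2 * k : ℝ) * β)) * Real.log (Zcw (α (2 * k)) β (2 * k)))
      atTop
      (nhds ((1 / (2 * β)) *
        sSup (Gfun hatα β '' (Set.Icc (-1 : ℝ) 1 ×ˢ Set.Icc (-1 : ℝ) 1)))) := by
  classical
  obtain ⟨mstar, hmstar, hmax⟩ := CWaux.exists_max hatα β
  have hSval : sSup (Gfun hatα β '' (Set.Icc (-1:ℝ) 1 ×ˢ Set.Icc (-1:ℝ) 1))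
      = Gfun hatα β mstar := CWaux.sSup_eq hatα β mstar hmstar hmax
  rw [hSval]
  set S := Gfun hatα β mstar with hS
  have h2k : Tendsto (fun k : ℕ => 2*k) atTop atTop :=
    tendsto_atTop_mono (fun k => by simp only [id_eq]; omega) tendsto_id
  have hαe : Tendsto (fun k => α (2*k)) atTop (nhds hatα) := hαlim.comp h2k
  have hδ : Tendsto (fun k : ℕ => |α (2*k) - hatα|) atTop (nhds 0) := by
    have h := (hαe.sub (tendsto_const_nhds (x := hatα))).abs
    simpa using h
  have hlogk : Tendsto (fun k : ℕ => Real.log ((k:ℝ)+1)/((k:ℝ)+1)) atTop (nhds 0) := by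
    have h := Real.isLittleO_log_id_atTop.tendsto_div_nhds_zero
    have hcomp : Tendsto (fun k : ℕ => (k:ℝ)+1) atTop atTop :=
      tendsto_atTop_add_const_right atTop 1 tendsto_natCast_atTop_atTop
    exact h.comp hcomp
  have hrat : Tendsto (fun k : ℕ => ((k:ℝ)+1)/(k:ℝ)) atTop (nhds 1) := by
    have h1 : Tendsto (fun k : ℕ => 1 + 1/(k:ℝ)) atTop (nhds (1 + 0)) :=
      tendsto_const_nhds.add tendsto_one_div_atTop_nhds_zero_nat
    rw [add_zero] at h1
    apply h1.congr'
    filter_upwards [eventually_ge_atTop 1] with k hk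
    have hk0 : (k:ℝ) ≠ 0 := Nat.cast_ne_zero.mpr (by omega)
    field_simp
  have hlog : Tendsto (fun k : ℕ => 2 * Real.log ((k:ℝ)+1)/(k:ℝ)) atTop (nhds 0) := by
    have hmul := hlogk.mul hrat
    rw [zero_mul] at hmul
    have heq : (fun k : ℕ => (Real.log ((k:ℝ)+1)/((k:ℝ)+1)) * (((k:ℝ)+1)/(k:ℝ)))
        =ᶠ[atTop] (fun k : ℕ => Real.log ((k:ℝ)+1)/(k:ℝ)) := by
      filter_upwards [eventually_ge_atTop 1] with k hk
      have hk0 : (k:ℝ) ≠ 0 := Nat.cast_ne_zero.mpr (by omega)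
      have hk1 : ((k:ℝ)+1) ≠ 0 := by positivity
      field_simp
    have h2 := (hmul.congr' heq).const_mul (2:ℝ)
    rw [mul_zero] at h2
    simpa [mul_div_assoc] using h2
  have hU : Tendsto (fun k : ℕ => (S + β/2 * |α (2*k) - hatα|) + 2 * Real.log ((k:ℝ)+1)/(k:ℝ))
      atTop (nhds S) := by
    have h1 : Tendsto (fun k : ℕ => S + β/2 * |α (2*k) - hatα|) atTop (nhds (S + β/2 * 0)) :=
      tendsto_const_nhds.add (hδ.const_mul (β/2))
    have h2 := h1.add hlog
    simpa using h2
  have hgrid : ∀ x : ℝ, x ∈ Set.Icc (-1:ℝ) 1 →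
      Tendsto (fun k : ℕ => CWaux.xg k (CWaux.gridj k x)) atTop (nhds x) := by
    intro x hx
    have h0 : Tendsto (fun k : ℕ => CWaux.xg k (CWaux.gridj k x) - x) atTop (nhds 0) := by
      apply squeeze_zero_norm'
      · filter_upwards [eventually_ge_atTop 1] with k hk
        simpa [Real.norm_eq_abs] using CWaux.xg_gridj_close k (by omega) x hx
      · exact tendsto_const_div_atTop_nhds_zero_nat 2
    have h1 := h0.add (tendsto_const_nhds (x := x))
    simpa using h1
  have hm1 : mstar.1 ∈ Set.Icc (-1:ℝ) 1 := hmstar.1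
  have hm2 : mstar.2 ∈ Set.Icc (-1:ℝ) 1 := hmstar.2
  set g : ℕ → ℝ × ℝ := fun k =>
    (CWaux.xg k (CWaux.gridj k mstar.1), CWaux.xg k (CWaux.gridj k mstar.2)) with hgdef
  have hgtend : Tendsto g atTop (nhds mstar) := by
    rw [hgdef]
    have h := (hgrid mstar.1 hm1).prodMk_nhds (hgrid mstar.2 hm2)
    simpa using h
  have hGg : Tendsto (fun k => Gfun hatα β (g k)) atTop (nhds S) := by
    have h := ((CWaux.continuous_Gfun hatα β).tendsto mstar).comp hgtend
    exact h
  have hL : Tendsto (fun k : ℕ => (Gfun hatα β (g k) - β/2 * |α (2*k) - hatα|)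
      - 2 * Real.log ((k:ℝ)+1)/(k:ℝ)) atTop (nhds S) := by
    have h1 := (hGg.sub (hδ.const_mul (β/2))).sub hlog
    simpa using h1
  have hbU : ∀ᶠ k : ℕ in atTop, (1/(k:ℝ)) * Real.log (Zcw (α (2*k)) β (2*k))
      ≤ (S + β/2 * |α (2*k) - hatα|) + 2 * Real.log ((k:ℝ)+1)/(k:ℝ) := by
    filter_upwards [eventually_ge_atTop 1] with k hk
    have hk0 : 0 < k := by omega
    have hkr : (0:ℝ) < k := Nat.cast_pos.mpr hk0
    have hSb : ∀ j1 j2 : ℕ, j1 ≤ k → j2 ≤ k →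
        Gfun (α (2*k)) β (CWaux.xg k j1, CWaux.xg k j2) ≤ S + β/2 * |α (2*k) - hatα| := by
      intro j1 j2 h1 h2
      have hmem : (CWaux.xg k j1, CWaux.xg k j2) ∈ CWaux.sq :=
        ⟨CWaux.xg_mem k j1 hk0 h1, CWaux.xg_mem k j2 hk0 h2⟩
      have hd := CWaux.Gfun_diff (α (2*k)) hatα β hβ.le _ hmem
      have hb := hmax _ hmem
      linarith
    have hstep := CWaux.logZ_le (α (2*k)) β k hk0 (S + β/2 * |α (2*k) - hatα|) hSb
    calc (1/(k:ℝ)) * Real.log (Zcw (α (2*k)) β (2*k))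
        ≤ (1/(k:ℝ)) * ((k:ℝ) * (S + β/2 * |α (2*k) - hatα|) + 2*Real.log ((k:ℝ)+1)) :=
          mul_le_mul_of_nonneg_left hstep (by positivity)
      _ = (S + β/2 * |α (2*k) - hatα|) + 2 * Real.log ((k:ℝ)+1)/(k:ℝ) := by
          field_simp
  have hbL : ∀ᶠ k : ℕ in atTop, (Gfun hatα β (g k) - β/2 * |α (2*k) - hatα|)
      - 2 * Real.log ((k:ℝ)+1)/(k:ℝ) ≤ (1/(k:ℝ)) * Real.log (Zcw (α (2*k)) β (2*k)) := by
    filter_upwards [eventually_ge_atTop 1] with k hk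
    have hk0 : 0 < k := by omega
    have hkr : (0:ℝ) < k := Nat.cast_pos.mpr hk0
    have hgmem : g k ∈ CWaux.sq :=
      ⟨CWaux.xg_mem k _ hk0 (CWaux.gridj_le k mstar.1),
       CWaux.xg_mem k _ hk0 (CWaux.gridj_le k mstar.2)⟩
    have hstep := CWaux.logZ_ge (α (2*k)) β k (CWaux.gridj k mstar.1) (CWaux.gridj k mstar.2)
      hk0 (CWaux.gridj_le k mstar.1) (CWaux.gridj_le k mstar.2)
    have hcmp : Gfun hatα β (g k) - β/2 * |α (2*k) - hatα| ≤ Gfun (α (2*k)) β (g k) := by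
      have h := CWaux.Gfun_diff hatα (α (2*k)) β hβ.le (g k) hgmem
      rw [abs_sub_comm] at h
      linarith
    calc (Gfun hatα β (g k) - β/2 * |α (2*k) - hatα|) - 2*Real.log ((k:ℝ)+1)/(k:ℝ)
        ≤ Gfun (α (2*k)) β (g k) - 2*Real.log ((k:ℝ)+1)/(k:ℝ) := by linarith
      _ = (1/(k:ℝ)) * ((k:ℝ) * Gfun (α (2*k)) β (g k) - 2*Real.log ((k:ℝ)+1)) := by
          field_simp
      _ ≤ (1/(k:ℝ)) * Real.log (Zcw (α (2*k)) β (2*k)) :=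
          mul_le_mul_of_nonneg_left hstep (by positivity)
  have hbS : Tendsto (fun k : ℕ => (1/(k:ℝ)) * Real.log (Zcw (α (2*k)) β (2*k)))
      atTop (nhds S) :=
    tendsto_of_tendsto_of_tendsto_of_le_of_le' hL hU hbL hbU
  have hfin := hbS.const_mul (1/(2*β))
  apply hfin.congr
  intro k
  ring

end
end

section
/- Concentration of the random interaction: there exist constants c₀, c₁, c₂ > 0 such that for all sufficiently large even n, ℙ(Ω̄_n^c) ≤ c₀ n² (e^{−n c₁/2} + e^{−n c₂/2}), where Ω̄_n is the event that for every configuration σ ∈ X_n, |Σ_{(i,j)∈E⁺(σ)} (ξ_{ij}+ζ_{ij}) − p_n(|E_I⁺(σ)| + α_n |E_E⁺(σ)|)| ≤ ρ_n · p_n(|E_I⁺(σ)| + α_n |E_E⁺(σ)|). -/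
open MeasureTheory ProbabilityTheory Finset Filter

noncomputable section

/-- Internal (intra-community) edge: `i < j` and both in the same community. -/
def innerEdge (n i j : ℕ) : Prop := i < j ∧ j < n ∧ (j < n / 2 ∨ n / 2 ≤ i)

/-- External (inter-community) edge. -/
def outerEdge (n i j : ℕ) : Prop := i < n / 2 ∧ n / 2 ≤ j ∧ j < n

instance (n i j : ℕ) : Decidable (innerEdge n i j) := by unfold innerEdge; infer_instance
instance (n i j : ℕ) : Decidable (outerEdge n i j) := by unfold outerEdge; infer_instance

/-- The random Hamiltonian of the Ising model on the 2-community SBM. -/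
def Hrand {Ω : Type*} (p : ℕ → ℝ) (ξ ζ : ℕ → ℕ × ℕ → Ω → ℝ)
    (n : ℕ) (σ : Fin n → Bool) (ω : Ω) : ℝ :=
  -(1 / ((n : ℝ) * p n)) *
    ((∑ i : Fin n, ∑ j : Fin n,
        if innerEdge n i j then ξ n ((i : ℕ), (j : ℕ)) ω * spin (σ i) * spin (σ j) else 0) +
     (∑ i : Fin n, ∑ j : Fin n,
        if outerEdge n i j then ζ n ((i : ℕ), (j : ℕ)) ω * spin (σ i) * spin (σ j) else 0))

/-- The random partition function. -/
def Zrand {Ω : Type*} (p : ℕ → ℝ) (ξ ζ : ℕ → ℕ × ℕ → Ω → ℝ)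
    (β : ℝ) (n : ℕ) (ω : Ω) : ℝ :=
  ∑ σ : Fin n → Bool, Real.exp (-β * Hrand p ξ ζ n σ ω)

/-- Expectation of an observable of the magnetization under the random Gibbs measure. -/
def gibbsExpect {Ω : Type*} (p : ℕ → ℝ) (ξ ζ : ℕ → ℕ × ℕ → Ω → ℝ)
    (β : ℝ) (n : ℕ) (φ : ℝ × ℝ → ℝ) (ω : Ω) : ℝ :=
  (∑ σ : Fin n → Bool, Real.exp (-β * Hrand p ξ ζ n σ ω) * φ (mag n σ)) /
    Zrand p ξ ζ β n ω

/-- Edge index set (internal ⊕ external) of the graph on `n` vertices. -/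
def isEdge (n : ℕ) : (ℕ × ℕ) ⊕ (ℕ × ℕ) → Prop :=
  Sum.elim (fun e => innerEdge n e.1 e.2) (fun e => outerEdge n e.1 e.2)

/-- A family of real random variables is Bernoulli with parameter `q`. -/
def IsBernoulli {Ω : Type*} [MeasurableSpace Ω] (P : Measure Ω) (X : Ω → ℝ) (q : ℝ) : Prop :=
  Measurable X ∧ (∀ᵐ ω ∂P, X ω = 0 ∨ X ω = 1) ∧ P {ω | X ω = 1} = ENNReal.ofReal q

/-- The SBM randomness hypotheses: Bernoulli marginals and independence over edges. -/
def SBMHyp {Ω : Type*} [MeasurableSpace Ω] (P : Measure Ω)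
    (p α : ℕ → ℝ) (ξ ζ : ℕ → ℕ × ℕ → Ω → ℝ) : Prop :=
  (∀ n i j, innerEdge n i j → IsBernoulli P (ξ n (i, j)) (p n)) ∧
  (∀ n i j, outerEdge n i j → IsBernoulli P (ζ n (i, j)) (α n * p n)) ∧
  (∀ n, iIndepFun
    (fun e : {e : (ℕ × ℕ) ⊕ (ℕ × ℕ) // isEdge n e} => Sum.elim (ξ n) (ζ n) e.1) P)


/-- Total random interaction over aligned pairs `E⁺(σ)`. -/
def plusSum {Ω : Type*} (ξ ζ : ℕ → ℕ × ℕ → Ω → ℝ) (n : ℕ) (σ : Fin n → Bool) (ω : Ω) : ℝ :=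
  (∑ i : Fin n, ∑ j : Fin n,
      if innerEdge n (i : ℕ) (j : ℕ) ∧ σ i = σ j then ξ n ((i : ℕ), (j : ℕ)) ω else 0) +
  (∑ i : Fin n, ∑ j : Fin n,
      if outerEdge n (i : ℕ) (j : ℕ) ∧ σ i = σ j then ζ n ((i : ℕ), (j : ℕ)) ω else 0)

/-- `|E_I⁺(σ)|`: number of aligned internal edges. -/
def cardInnerPlus (n : ℕ) (σ : Fin n → Bool) : ℕ :=
  (Finset.univ.filter fun e : Fin n × Fin n =>
    innerEdge n (e.1 : ℕ) (e.2 : ℕ) ∧ σ e.1 = σ e.2).card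

/-- `|E_E⁺(σ)|`: number of aligned external edges. -/
def cardOuterPlus (n : ℕ) (σ : Fin n → Bool) : ℕ :=
  (Finset.univ.filter fun e : Fin n × Fin n =>
    outerEdge n (e.1 : ℕ) (e.2 : ℕ) ∧ σ e.1 = σ e.2).card

/-- The good event `Ω̄_n` on which the random interaction concentrates, uniformly over all
configurations. -/
def goodEvent {Ω : Type*} (p αs ρ : ℕ → ℝ) (ξ ζ : ℕ → ℕ × ℕ → Ω → ℝ) (n : ℕ) : Set Ω :=
  {ω | ∀ σ : Fin n → Bool,
    |plusSum ξ ζ n σ ω -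
        p n * ((cardInnerPlus n σ : ℝ) + αs n * (cardOuterPlus n σ : ℝ))| ≤
      ρ n * (p n * ((cardInnerPlus n σ : ℝ) + αs n * (cardOuterPlus n σ : ℝ)))}

/-- The bipartite Curie–Weiss Hamiltonian in edge form:
`H̄_n(σ) = −(1/n) Σ_{E_I} σ_i σ_j − (α_n/n) Σ_{E_E} σ_i σ_j`. -/
def HcwE (a : ℝ) (n : ℕ) (σ : Fin n → Bool) : ℝ :=
  -(1 / (n : ℝ)) * (∑ i : Fin n, ∑ j : Fin n,
      if innerEdge n (i : ℕ) (j : ℕ) then spin (σ i) * spin (σ j) else 0) -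
  (a / (n : ℝ)) * (∑ i : Fin n, ∑ j : Fin n,
      if outerEdge n (i : ℕ) (j : ℕ) then spin (σ i) * spin (σ j) else 0)


/- ======================= Auxiliary development ======================= -/

section AuxReal

lemma exp_taylor3 {u : ℝ} (hu : |u| ≤ 1) :
    Real.exp u - 1 - u ≤ u^2 * (1 + |u|) / 2 := by
  have h := Real.exp_bound hu (by norm_num : 0 < 3)
  have hsum : ∑ m ∈ Finset.range 3, u ^ m / (m.factorial : ℝ) = 1 + u + u^2/2 := by
    norm_num [Finset.sum_range_succ, Nat.factorial]
  rw [hsum] at h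
  have h2 : Real.exp u - (1 + u + u^2/2) ≤ |u|^3 * (Nat.succ 3 / ((Nat.factorial 3 : ℕ) * 3 : ℝ)) :=
    (abs_sub_le_iff.mp h).1
  have h3 : (|u|:ℝ)^3 = u^2 * |u| := by
    rw [pow_succ, sq_abs]
  have h4 : ((Nat.succ 3 : ℝ) / ((Nat.factorial 3 : ℕ) * 3 : ℝ)) = 2/9 := by
    norm_num [Nat.factorial]
  rw [h4, h3] at h2
  nlinarith [sq_nonneg u, abs_nonneg u]

lemma bern_factor_bound {q u : ℝ} (hq0 : 0 ≤ q) (hq1 : q ≤ 1) (hu : |u| ≤ 1) :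
    (1 + q * (Real.exp u - 1)) * Real.exp (-(u * q)) ≤
      Real.exp (q * (u^2 * (1 + |u|) / 2)) := by
  have h1 : 1 + q * (Real.exp u - 1) ≤ Real.exp (q * (Real.exp u - 1)) := by
    have := Real.add_one_le_exp (q * (Real.exp u - 1))
    linarith
  calc (1 + q * (Real.exp u - 1)) * Real.exp (-(u * q))
      ≤ Real.exp (q * (Real.exp u - 1)) * Real.exp (-(u * q)) := by
        exact mul_le_mul_of_nonneg_right h1 (Real.exp_nonneg _)
    _ = Real.exp (q * (Real.exp u - 1) - u * q) := by
        rw [← Real.exp_add]; ring_nf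
    _ ≤ Real.exp (q * (u^2 * (1 + |u|) / 2)) := by
        apply Real.exp_le_exp.2
        have h2 := exp_taylor3 hu
        nlinarith

lemma bern_factor_nonneg {q u : ℝ} (hq0 : 0 ≤ q) (hq1 : q ≤ 1) :
    0 ≤ (1 + q * (Real.exp u - 1)) * Real.exp (-(u * q)) := by
  apply mul_nonneg _ (Real.exp_nonneg _)
  nlinarith [Real.exp_nonneg u]

lemma num_t_pos {R : ℝ} (hR : 2000 ≤ R) : (0:ℝ) < 1/(25*R) := by positivity

lemma num1 {R n t Mp : ℝ} (hR : 2000 ≤ R) (hn : 0 ≤ n) (ht : t = 1/(25*R))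
    (hMp0 : 0 ≤ Mp) (hMp : Mp ≤ R^2*n/4) :
    Mp*(t^2*(1+t)/2) - t*((1/100)*R*n) ≤ -(n/8000) := by
  have hR0 : (0:ℝ) < R := by linarith
  have ht0 : 0 < t := by rw [ht]; positivity
  have ht1 : t ≤ 1/50000 := by
    rw [ht]
    rw [div_le_div_iff₀ (by positivity) (by norm_num)]
    linarith
  have htR : t * R = 1/25 := by
    rw [ht]; field_simp
  have h1 : Mp*(t^2*(1+t)/2) ≤ (R^2*n/4)*(t^2*(1+t)/2) := by
    apply mul_le_mul_of_nonneg_right hMp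
    nlinarith
  have h2 : (R^2*n/4)*(t^2*(1+t)/2) = (t*R)^2*(1+t)*n/8 := by ring
  have h3 : t*((1/100)*R*n) = (t*R)*n/100 := by ring
  rw [htR] at h2
  nlinarith

lemma num3 {R n t Mp : ℝ} (hR : 2000 ≤ R) (hn : 0 ≤ n) (ht : t = 47/(20*R))
    (hMp0 : 0 ≤ Mp) (hMp : Mp ≤ R^2*n/4) :
    Mp*(t^2*(1+t)/2) - t*((3/5)*R*n) ≤ -((143/200)*n) := by
  have hR0 : (0:ℝ) < R := by linarith
  have ht0 : 0 < t := by rw [ht]; positivity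
  have ht1 : t ≤ 47/40000 := by
    rw [ht]
    rw [div_le_div_iff₀ (by positivity) (by norm_num)]
    linarith
  have htR : t * R = 47/20 := by
    rw [ht]; field_simp
  have h1 : Mp*(t^2*(1+t)/2) ≤ (R^2*n/4)*(t^2*(1+t)/2) := by
    apply mul_le_mul_of_nonneg_right hMp
    nlinarith
  have h2 : (R^2*n/4)*(t^2*(1+t)/2) = (t*R)^2*(1+t)*n/8 := by ring
  have h3 : t*((3/5)*R*n) = (t*R)*(3/5)*n := by ring
  rw [htR] at h2
  nlinarith

lemma num4 {R n A κ t Mp : ℝ} (hR : 2000 ≤ R) (hn : 0 ≤ n) (hA0 : 0 ≤ A) (hA1 : A ≤ 1)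
    (hκ : κ = 3/25 + (3/4)*A)
    (ht : t = if 400*κ ≤ A*R then 4*κ/(A*R) else 1/100)
    (hMp0 : 0 ≤ Mp) (hMp : Mp ≤ A*(R^2*n/4)) :
    (Mp*(t^2*(1+t)/2) - t*(κ*R*n) ≤ -((1425/2000)*n)) ∧ 0 < t ∧ t ≤ 1 := by
  have hR0 : (0:ℝ) < R := by linarith
  have hκ0 : (3/25 : ℝ) ≤ κ := by rw [hκ]; linarith
  by_cases hcase : 400*κ ≤ A*R
  · rw [if_pos hcase] at ht
    have hA : 0 < A := by
      rcases lt_or_ge 0 A with h | h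
      · exact h
      · exfalso
        have : A = 0 := le_antisymm h hA0
        rw [this] at hcase
        simp at hcase
        linarith
    have hAR : 0 < A * R := by positivity
    have ht0 : 0 < t := by rw [ht]; positivity
    have ht1 : t ≤ 1/100 := by
      rw [ht, div_le_div_iff₀ hAR (by norm_num)]
      linarith
    have htAR : t * (A * R) = 4*κ := by
      rw [ht]; field_simp
    have hκsq : (9/25)*A ≤ κ^2 := by
      rw [hκ]; nlinarith [sq_nonneg ((3/25 : ℝ) - (3/4)*A)]
    refine ⟨?_, ht0, by linarith⟩
    -- term1 ≤ (A*R^2*n/4) * t^2*(1+t)/2 = (t*A*R)*(t*R)*(1+t)*n/8 = 4κ*(t*R)*(1+t)*n/8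
    have h1 : Mp*(t^2*(1+t)/2) ≤ (A*(R^2*n/4))*(t^2*(1+t)/2) := by
      apply mul_le_mul_of_nonneg_right hMp
      nlinarith
    have h2 : (A*(R^2*n/4))*(t^2*(1+t)/2) = (t*(A*R))*((t*R)*(1+t)*n/8) := by ring
    rw [htAR] at h2
    -- so term1 ≤ 4κ(tR)(1+t)n/8 = κ(tR)(1+t)n/2 ; term2 = (tR)κn
    -- diff ≤ κ(tR)n((1+t)/2 - 1) = -κ(tR)n(1-t)/2 ≤ -(99/100)/2 * κ*(tR) * n
    -- κ*(tR) = κ*4κ/A = 4κ²/A ≥ 4*(9/25) = 36/25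
    have htR : t*R = 4*κ/A := by
      field_simp at htAR ⊢
      linarith [htAR]
    have hκtR : (36/25 : ℝ) ≤ κ*(t*R) := by
      rw [htR]
      rw [show κ*(4*κ/A) = 4*κ^2/A by ring, le_div_iff₀ hA]
      nlinarith
    have h5 : (36/25 : ℝ)*(99/100) ≤ κ*(t*R)*(1-t) := by nlinarith
    have h6 : (36/25 : ℝ)*(99/100)*n ≤ κ*(t*R)*(1-t)*n := mul_le_mul_of_nonneg_right h5 hn
    have e1 : 4*κ*(t*R*(1+t)*n/8) - κ*(t*R)*n = -(κ*(t*R)*(1-t)*n)/2 := by ring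
    have e2 : t*(κ*R*n) = κ*(t*R)*n := by ring
    linarith
  · rw [if_neg hcase] at ht
    push_neg at hcase
    subst ht
    refine ⟨?_, by norm_num, by norm_num⟩
    have h3 : (0:ℝ) ≤ R*n := by positivity
    have h2 : A*(R^2*n/4) ≤ 100*κ*R*n := by
      nlinarith [mul_le_mul_of_nonneg_right hcase.le (show (0:ℝ) ≤ R*n/4 by positivity)]
    have h1 : Mp*((1/100:ℝ)^2*(1+1/100)/2) ≤ (100*κ*R*n)*((1/100:ℝ)^2*(1+1/100)/2) := by
      apply mul_le_mul_of_nonneg_right (le_trans hMp h2)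
      norm_num
    have hκR : (240:ℝ) ≤ κ*R := by nlinarith
    have h6 : (240:ℝ)*n ≤ κ*R*n := mul_le_mul_of_nonneg_right hκR hn
    nlinarith [h1, h6]

end AuxReal

section AuxProb

variable {Ω : Type*} [MeasurableSpace Ω] {P : Measure Ω} [IsProbabilityMeasure P]

lemma bern_int_exp {X : Ω → ℝ} {q : ℝ} (h : IsBernoulli P X q)
    (hq0 : 0 ≤ q) (u : ℝ) :
    ∫ ω, Real.exp (u * X ω) ∂P = 1 + q * (Real.exp u - 1) := by
  obtain ⟨hm, hae, hq⟩ := h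
  have hA : MeasurableSet (X ⁻¹' {1}) := hm (measurableSet_singleton 1)
  have hPA : P (X ⁻¹' {1}) = ENNReal.ofReal q := hq
  have hq1' : ENNReal.ofReal q ≤ 1 := hPA ▸ prob_le_one
  have hint : Integrable (fun ω => Real.exp (u * X ω)) P := by
    refine Integrable.mono' (integrable_const (Real.exp |u|))
      ((hm.const_mul u).exp.aestronglyMeasurable) ?_
    filter_upwards [hae] with ω hω
    rcases hω with h0 | h1
    · simp only [h0, mul_zero, Real.exp_zero, Real.norm_eq_abs, abs_one]
      exact Real.one_le_exp (abs_nonneg u)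
    · simp only [h1, mul_one, Real.norm_eq_abs, Real.abs_exp]
      exact Real.exp_le_exp.2 (le_abs_self u)
  have hsplit := integral_add_compl hA hint
  have h1 : ∫ ω in X ⁻¹' {1}, Real.exp (u * X ω) ∂P = q * Real.exp u := by
    rw [setIntegral_congr_fun hA (g := fun _ => Real.exp u) ?_]
    · rw [setIntegral_const, measureReal_def, hPA, ENNReal.toReal_ofReal hq0, smul_eq_mul]
    · intro x hx
      simp only [Set.mem_preimage, Set.mem_singleton_iff] at hx
      simp only [hx, mul_one]
  have h0 : ∫ ω in (X ⁻¹' {1})ᶜ, Real.exp (u * X ω) ∂P = 1 - q := by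
    have : ∫ ω in (X ⁻¹' {1})ᶜ, Real.exp (u * X ω) ∂P
        = ∫ _ω in (X ⁻¹' {1})ᶜ, (1:ℝ) ∂P := by
      refine setIntegral_congr_ae hA.compl ?_
      filter_upwards [hae] with ω hω hmem
      rcases hω with h0 | h1
      · simp [h0]
      · exact absurd h1 hmem
    rw [this, setIntegral_const, measureReal_def, measure_compl hA (measure_ne_top _ _), hPA,
      measure_univ, ENNReal.toReal_sub_of_le hq1' (by simp), ENNReal.toReal_one,
      ENNReal.toReal_ofReal hq0, smul_eq_mul, mul_one]
  have := hsplit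
  rw [h1, h0] at this
  rw [← this]; ring

lemma chernoff_one {ι : Type*} (X : ι → Ω → ℝ)
    (hind : iIndepFun X P) (hmeas : ∀ i, Measurable (X i))
    (F : Finset ι) (q ε : ι → ℝ) (hq : ∀ i ∈ F, IsBernoulli P (X i) (q i))
    (hq0 : ∀ i ∈ F, 0 ≤ q i) (hq1 : ∀ i ∈ F, q i ≤ 1)
    (hε : ∀ i ∈ F, ε i = 1 ∨ ε i = -1) {t : ℝ} (ht0 : 0 < t) (ht1 : t ≤ 1) (s : ℝ) :
    P {ω | s ≤ ∑ i ∈ F, ε i * (X i ω - q i)} ≤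
      ENNReal.ofReal (Real.exp ((∑ i ∈ F, q i) * (t^2 * (1+t) / 2) - t * s)) := by
  classical
  set X' : ι → Ω → ℝ := fun i ω => ε i * X i ω with hX'
  have hmeas' : ∀ i, Measurable (X' i) := fun i => (hmeas i).const_mul (ε i)
  have hind' : iIndepFun X' P := by
    have := hind.comp (fun i (x : ℝ) => ε i * x) (fun i => measurable_id.const_mul _)
    exact this
  -- event rewrite
  have hev : {ω | s ≤ ∑ i ∈ F, ε i * (X i ω - q i)}
      = {ω | s + ∑ i ∈ F, ε i * q i ≤ (∑ i ∈ F, X' i) ω} := by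
    ext ω
    simp only [Set.mem_setOf_eq, Finset.sum_apply, hX', mul_sub, Finset.sum_sub_distrib]
    constructor <;> intro h <;> linarith
  -- integrability
  have hbd : ∀ i ∈ F, Integrable (fun ω => Real.exp (t * X' i ω)) P := by
    intro i hi
    refine Integrable.mono' (integrable_const (Real.exp 1))
      (((hmeas' i).const_mul t).exp.aestronglyMeasurable) ?_
    filter_upwards [(hq i hi).2.1] with ω hω
    have hval : |X i ω| ≤ 1 := by
      rcases hω with h0 | h1
      · simp [h0]
      · simp [h1]
    have hε1 : |ε i| = 1 := by rcases hε i hi with h | h <;> simp [h]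
    have : |t * X' i ω| ≤ 1 := by
      rw [hX']
      simp only []
      rw [abs_mul, abs_mul, hε1, one_mul]
      calc |t| * |X i ω| ≤ 1 * 1 := by
            apply mul_le_mul _ hval (abs_nonneg _) zero_le_one
            rw [abs_of_pos ht0]; exact ht1
        _ = 1 := by ring
    simp only [Real.norm_eq_abs, Real.abs_exp]
    exact Real.exp_le_exp.2 ((le_abs_self _).trans this)
  have hintsum : Integrable (fun ω => Real.exp (t * (∑ i ∈ F, X' i) ω)) P :=
    hind'.integrable_exp_mul_sum hmeas' hbd
  have happly := measure_ge_le_exp_mul_mgf (μ := P) (X := ∑ i ∈ F, X' i)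
    (s + ∑ i ∈ F, ε i * q i) ht0.le hintsum
  have hmgf : mgf (∑ i ∈ F, X' i) P t = ∏ i ∈ F, mgf (X' i) P t :=
    hind'.mgf_sum hmeas' F
  have hfac : ∀ i ∈ F, mgf (X' i) P t = 1 + q i * (Real.exp (t * ε i) - 1) := by
    intro i hi
    have : mgf (X' i) P t = ∫ ω, Real.exp ((t * ε i) * X i ω) ∂P := by
      unfold mgf
      congr 1; funext ω; rw [hX']; ring_nf
    rw [this, bern_int_exp (hq i hi) (hq0 i hi)]
  -- key real inequality
  have hkey : ∀ i ∈ F, (1 + q i * (Real.exp (t * ε i) - 1)) * Real.exp (-(t * ε i * q i))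
      ≤ Real.exp (q i * (t^2 * (1+t) / 2)) := by
    intro i hi
    have habs : |t * ε i| = t := by
      have hε1 : |ε i| = 1 := by rcases hε i hi with h | h <;> simp [h]
      rw [abs_mul, hε1, mul_one, abs_of_pos ht0]
    have := bern_factor_bound (hq0 i hi) (hq1 i hi) (u := t * ε i) (by rw [habs]; exact ht1)
    rw [habs] at this
    have hsq : (t * ε i)^2 = t^2 := by
      rcases hε i hi with h | h <;> rw [h] <;> ring
    rw [hsq] at this
    exact this
  -- assemble
  rw [hev]
  have hchain : Real.exp (-t * (s + ∑ i ∈ F, ε i * q i)) * mgf (∑ i ∈ F, X' i) P t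
      ≤ Real.exp ((∑ i ∈ F, q i) * (t^2 * (1+t) / 2) - t * s) := by
    rw [hmgf]
    have e1 : Real.exp (-t * (s + ∑ i ∈ F, ε i * q i))
        = Real.exp (-t * s) * ∏ i ∈ F, Real.exp (-(t * ε i * q i)) := by
      rw [← Real.exp_sum, ← Real.exp_add]
      have e0 : ∑ x ∈ F, -(t * ε x * q x) = -t * ∑ i ∈ F, ε i * q i := by
        rw [Finset.mul_sum]
        apply Finset.sum_congr rfl
        intro i _
        ring
      rw [e0]
      ring
    rw [e1]
    have e2 : Real.exp (-t * s) * (∏ i ∈ F, Real.exp (-(t * ε i * q i))) * ∏ i ∈ F, mgf (X' i) P t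
        = Real.exp (-t * s) * ∏ i ∈ F, (1 + q i * (Real.exp (t * ε i) - 1)) * Real.exp (-(t * ε i * q i)) := by
      rw [mul_assoc, ← Finset.prod_mul_distrib]
      congr 1
      apply Finset.prod_congr rfl
      intro i hi
      rw [hfac i hi]
      ring
    rw [e2]
    calc Real.exp (-t * s) * ∏ i ∈ F, (1 + q i * (Real.exp (t * ε i) - 1)) * Real.exp (-(t * ε i * q i))
        ≤ Real.exp (-t * s) * ∏ i ∈ F, Real.exp (q i * (t^2 * (1+t) / 2)) := by
          apply mul_le_mul_of_nonneg_left _ (Real.exp_nonneg _)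
          apply Finset.prod_le_prod
          · intro i hi; exact bern_factor_nonneg (hq0 i hi) (hq1 i hi)
          · exact hkey
      _ = Real.exp ((∑ i ∈ F, q i) * (t^2 * (1+t) / 2) - t * s) := by
          rw [← Real.exp_sum, ← Real.exp_add, ← Finset.sum_mul]
          ring_nf
  have hfin : (P {ω | s + ∑ i ∈ F, ε i * q i ≤ (∑ i ∈ F, X' i) ω}).toReal
      ≤ Real.exp ((∑ i ∈ F, q i) * (t^2 * (1+t) / 2) - t * s) := le_trans happly hchain
  rw [← ENNReal.ofReal_toReal (measure_ne_top P _)]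
  exact ENNReal.ofReal_le_ofReal hfin

lemma chernoff_abs {ι : Type*} (X : ι → Ω → ℝ)
    (hind : iIndepFun X P) (hmeas : ∀ i, Measurable (X i))
    (F : Finset ι) (q ε : ι → ℝ) (hq : ∀ i ∈ F, IsBernoulli P (X i) (q i))
    (hq0 : ∀ i ∈ F, 0 ≤ q i) (hq1 : ∀ i ∈ F, q i ≤ 1)
    (hε : ∀ i ∈ F, ε i = 1 ∨ ε i = -1) {t : ℝ} (ht0 : 0 < t) (ht1 : t ≤ 1) (s : ℝ) :
    P {ω | s ≤ |∑ i ∈ F, ε i * (X i ω - q i)|} ≤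
      ENNReal.ofReal (2 * Real.exp ((∑ i ∈ F, q i) * (t^2 * (1+t) / 2) - t * s)) := by
  classical
  have hsub : {ω | s ≤ |∑ i ∈ F, ε i * (X i ω - q i)|} ⊆
      {ω | s ≤ ∑ i ∈ F, ε i * (X i ω - q i)} ∪
      {ω | s ≤ ∑ i ∈ F, (-ε i) * (X i ω - q i)} := by
    intro ω hω
    have hω' : s ≤ |∑ i ∈ F, ε i * (X i ω - q i)| := hω
    rcases le_abs.mp hω' with h | h
    · exact Or.inl h
    · right
      simp only [Set.mem_setOf_eq]
      calc s ≤ -∑ i ∈ F, ε i * (X i ω - q i) := h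
        _ = ∑ i ∈ F, (-ε i) * (X i ω - q i) := by
            rw [← Finset.sum_neg_distrib]
            apply Finset.sum_congr rfl
            intro i _; ring
  have hε' : ∀ i ∈ F, (-ε i) = 1 ∨ (-ε i) = -1 := by
    intro i hi
    rcases hε i hi with h | h <;> simp [h]
  calc P {ω | s ≤ |∑ i ∈ F, ε i * (X i ω - q i)|}
      ≤ P ({ω | s ≤ ∑ i ∈ F, ε i * (X i ω - q i)} ∪
          {ω | s ≤ ∑ i ∈ F, (-ε i) * (X i ω - q i)}) := measure_mono hsub
    _ ≤ P {ω | s ≤ ∑ i ∈ F, ε i * (X i ω - q i)}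
        + P {ω | s ≤ ∑ i ∈ F, (-ε i) * (X i ω - q i)} := measure_union_le _ _
    _ ≤ ENNReal.ofReal (Real.exp ((∑ i ∈ F, q i) * (t^2 * (1+t) / 2) - t * s))
        + ENNReal.ofReal (Real.exp ((∑ i ∈ F, q i) * (t^2 * (1+t) / 2) - t * s)) := by
        gcongr
        · exact chernoff_one X hind hmeas F q ε hq hq0 hq1 hε ht0 ht1 s
        · exact chernoff_one X hind hmeas F q (fun i => -ε i) hq hq0 hq1 hε' ht0 ht1 s
    _ = ENNReal.ofReal (2 * Real.exp ((∑ i ∈ F, q i) * (t^2 * (1+t) / 2) - t * s)) := by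
        rw [← ENNReal.ofReal_add (Real.exp_nonneg _) (Real.exp_nonneg _)]
        · congr 1; ring
end AuxProb

section AuxComb

lemma offdiag_half {n : ℕ} (B : Finset (Fin n)) (f : Fin n → ℝ) :
    2 * ∑ e ∈ (B ×ˢ B).filter (fun e => e.1 < e.2), f e.1 * f e.2
      = (∑ i ∈ B, f i)^2 - ∑ i ∈ B, (f i)^2 := by
  classical
  have hsq : (∑ i ∈ B, f i)^2 = ∑ e ∈ B ×ˢ B, f e.1 * f e.2 := by
    rw [sq, Finset.sum_mul_sum, Finset.sum_product]
  have hsplit : ∑ e ∈ B ×ˢ B, f e.1 * f e.2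
      = ∑ e ∈ (B ×ˢ B).filter (fun e => e.1 < e.2), f e.1 * f e.2
      + ∑ e ∈ (B ×ˢ B).filter (fun e => ¬ e.1 < e.2), f e.1 * f e.2 :=
    (Finset.sum_filter_add_sum_filter_not _ _ _).symm
  have hdisj : Disjoint ((B ×ˢ B).filter (fun e => e.2 < e.1))
      ((B ×ˢ B).filter (fun e => e.1 = e.2)) := by
    apply Finset.disjoint_filter_filter'
    rw [disjoint_iff_inf_le]
    intro e he
    simp only [Pi.inf_apply, inf_Prop_eq] at he
    exact absurd (he.2 ▸ he.1) (lt_irrefl _)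
  have hunion : (B ×ˢ B).filter (fun e => ¬ e.1 < e.2)
      = (B ×ˢ B).filter (fun e => e.2 < e.1) ∪ (B ×ˢ B).filter (fun e => e.1 = e.2) := by
    rw [← Finset.filter_or]
    apply Finset.filter_congr
    intro e _
    constructor
    · intro h
      rcases lt_or_eq_of_le (not_lt.mp h) with h' | h'
      · exact Or.inl h'
      · exact Or.inr h'.symm
    · intro h
      rcases h with h | h
      · exact not_lt.mpr h.le
      · exact not_lt.mpr h.ge
  have hdiag : ∑ e ∈ (B ×ˢ B).filter (fun e => e.1 = e.2), f e.1 * f e.2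
      = ∑ i ∈ B, (f i)^2 := by
    apply Finset.sum_nbij' (i := fun e => e.1) (j := fun i => (i, i))
    · intro e he
      simp only [Finset.mem_filter, Finset.mem_product] at he
      exact he.1.1
    · intro a ha
      simp only [Finset.mem_filter, Finset.mem_product]
      exact ⟨⟨ha, ha⟩, trivial⟩
    · intro e he
      simp only [Finset.mem_filter, Finset.mem_product] at he
      exact Prod.ext rfl he.2
    · intro a _; rfl
    · intro e he
      simp only [Finset.mem_filter, Finset.mem_product] at he
      rw [← he.2, sq]
  have hswap : ∑ e ∈ (B ×ˢ B).filter (fun e => e.2 < e.1), f e.1 * f e.2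
      = ∑ e ∈ (B ×ˢ B).filter (fun e => e.1 < e.2), f e.1 * f e.2 := by
    apply Finset.sum_nbij' (i := fun e => Prod.swap e) (j := fun e => Prod.swap e)
    · intro e he
      simp only [Finset.mem_filter, Finset.mem_product] at he ⊢
      exact ⟨⟨he.1.2, he.1.1⟩, he.2⟩
    · intro e he
      simp only [Finset.mem_filter, Finset.mem_product] at he ⊢
      exact ⟨⟨he.1.2, he.1.1⟩, he.2⟩
    · intro e _; rfl
    · intro e _; rfl
    · intro e _
      simp only [Prod.fst_swap, Prod.snd_swap]
      ring
  rw [hsq, hsplit, hunion, Finset.sum_union hdisj, hdiag, hswap]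
  ring

variable {n : ℕ}

def blk1 (n : ℕ) : Finset (Fin n) := Finset.univ.filter (fun i => (i : ℕ) < n / 2)
def blk2 (n : ℕ) : Finset (Fin n) := Finset.univ.filter (fun i => n / 2 ≤ (i : ℕ))
def IEs (n : ℕ) : Finset (Fin n × Fin n) :=
  Finset.univ.filter (fun e => innerEdge n e.1 e.2)
def OEs (n : ℕ) : Finset (Fin n × Fin n) :=
  Finset.univ.filter (fun e => outerEdge n e.1 e.2)

lemma IE_eq (n : ℕ) : IEs n
    = ((blk1 n ×ˢ blk1 n).filter (fun e => e.1 < e.2))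
      ∪ ((blk2 n ×ˢ blk2 n).filter (fun e => e.1 < e.2)) := by
  ext e
  obtain ⟨⟨a, ha⟩, ⟨b, hb⟩⟩ := e
  simp only [IEs, blk1, blk2, Fin.lt_def, Finset.mem_filter, Finset.mem_product,
    Finset.mem_union, Finset.mem_univ, true_and]
  unfold innerEdge
  omega

lemma IE_disj (n : ℕ) : Disjoint ((blk1 n ×ˢ blk1 n).filter (fun e : Fin n × Fin n => e.1 < e.2))
    ((blk2 n ×ˢ blk2 n).filter (fun e => e.1 < e.2)) := by
  rw [Finset.disjoint_left]
  intro e he1 he2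
  simp only [blk1, blk2, Finset.mem_filter, Finset.mem_product] at he1 he2
  have h1 := he1.1.1.2
  have h2 := he2.1.1.2
  omega

lemma OE_eq (n : ℕ) : OEs n = blk1 n ×ˢ blk2 n := by
  ext e
  obtain ⟨⟨a, ha⟩, ⟨b, hb⟩⟩ := e
  simp only [OEs, blk1, blk2, Finset.mem_filter, Finset.mem_product,
    Finset.mem_univ, true_and]
  unfold outerEdge
  omega

lemma card_blk1 (n : ℕ) : (blk1 n).card = n / 2 := by
  have h : n / 2 ≤ n := Nat.div_le_self n 2
  rcases Nat.eq_or_lt_of_le h with heq | hlt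
  · -- n/2 = n means n = 0
    have : n = 0 := by omega
    subst this
    simp [blk1]
  · have : blk1 n = Finset.Iio (⟨n / 2, hlt⟩ : Fin n) := by
      ext i; simp [blk1, Finset.mem_Iio, Fin.lt_def]
    rw [this, Fin.card_Iio]

lemma card_blk2 (n : ℕ) : (blk2 n).card = n - n / 2 := by
  have : blk2 n = (blk1 n)ᶜ := by
    ext i; simp [blk1, blk2, not_lt]
  rw [this, Finset.card_compl, card_blk1]
  simp

lemma spin_sq (b : Bool) : spin b ^ 2 = 1 := by cases b <;> simp [spin]

lemma spin_mul (b c : Bool) : spin b * spin c = if b = c then 1 else -1 := by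
  cases b <;> cases c <;> simp [spin]

-- sum over block pairs of spins
lemma block_pair_sum (B : Finset (Fin n)) (σ : Fin n → Bool) :
    ∑ e ∈ (B ×ˢ B).filter (fun e => e.1 < e.2), spin (σ e.1) * spin (σ e.2)
      = ((∑ i ∈ B, spin (σ i))^2 - B.card) / 2 := by
  have h := offdiag_half B (fun i => spin (σ i))
  have h2 : ∑ i ∈ B, (spin (σ i))^2 = (B.card : ℝ) := by
    rw [Finset.sum_congr rfl (fun i _ => spin_sq (σ i))]
    simp
  rw [h2] at h
  linarith

lemma block_pair_card (B : Finset (Fin n)) :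
    (((B ×ˢ B).filter (fun e => e.1 < e.2)).card : ℝ)
      = ((B.card : ℝ)^2 - B.card) / 2 := by
  have h := offdiag_half B (fun _ => (1:ℝ))
  simp only [mul_one, Finset.sum_const, nsmul_eq_mul, mul_one, one_pow] at h
  linarith

lemma ind_eq (σ : Fin n → Bool) (e : Fin n × Fin n) :
    (if σ e.1 = σ e.2 then (1:ℝ) else 0) = (1 + spin (σ e.1) * spin (σ e.2)) / 2 := by
  rw [spin_mul]
  by_cases h : σ e.1 = σ e.2 <;> simp [h]

lemma cardInner_sum (σ : Fin n → Bool) :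
    (cardInnerPlus n σ : ℝ) = ∑ e ∈ IEs n, (if σ e.1 = σ e.2 then (1:ℝ) else 0) := by
  unfold cardInnerPlus IEs
  rw [Finset.sum_filter]
  have : ∀ e : Fin n × Fin n,
      (if innerEdge n e.1 e.2 then (if σ e.1 = σ e.2 then (1:ℝ) else 0) else 0)
      = (if innerEdge n e.1 e.2 ∧ σ e.1 = σ e.2 then (1:ℝ) else 0) := by
    intro e
    by_cases h1 : innerEdge n e.1 e.2 <;> by_cases h2 : σ e.1 = σ e.2 <;> simp [h1, h2]
  rw [Finset.sum_congr rfl (fun e _ => this e), ← Finset.sum_filter, Finset.sum_const]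
  simp

lemma cardOuter_sum (σ : Fin n → Bool) :
    (cardOuterPlus n σ : ℝ) = ∑ e ∈ OEs n, (if σ e.1 = σ e.2 then (1:ℝ) else 0) := by
  unfold cardOuterPlus OEs
  rw [Finset.sum_filter]
  have : ∀ e : Fin n × Fin n,
      (if outerEdge n e.1 e.2 then (if σ e.1 = σ e.2 then (1:ℝ) else 0) else 0)
      = (if outerEdge n e.1 e.2 ∧ σ e.1 = σ e.2 then (1:ℝ) else 0) := by
    intro e
    by_cases h1 : outerEdge n e.1 e.2 <;> by_cases h2 : σ e.1 = σ e.2 <;> simp [h1, h2]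
  rw [Finset.sum_congr rfl (fun e _ => this e), ← Finset.sum_filter, Finset.sum_const]
  simp

lemma cI_formula (σ : Fin n → Bool) :
    (cardInnerPlus n σ : ℝ) = (((IEs n).card : ℝ)
      + ∑ e ∈ IEs n, spin (σ e.1) * spin (σ e.2)) / 2 := by
  rw [cardInner_sum, Finset.sum_congr rfl (fun e _ => ind_eq σ e)]
  rw [← Finset.sum_div]
  congr 1
  rw [Finset.sum_add_distrib, Finset.sum_const]
  simp

lemma cO_formula (σ : Fin n → Bool) :
    (cardOuterPlus n σ : ℝ) = (((OEs n).card : ℝ)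
      + ∑ e ∈ OEs n, spin (σ e.1) * spin (σ e.2)) / 2 := by
  rw [cardOuter_sum, Finset.sum_congr rfl (fun e _ => ind_eq σ e)]
  rw [← Finset.sum_div]
  congr 1
  rw [Finset.sum_add_distrib, Finset.sum_const]
  simp

lemma even_cast_half (hn : Even n) : ((n / 2 : ℕ) : ℝ) = (n:ℝ)/2 := by
  obtain ⟨k, hk⟩ := hn
  subst hk
  have h2 : (k + k) / 2 = k := by omega
  rw [h2]; push_cast; ring

lemma even_cast_half' (hn : Even n) : ((n - n / 2 : ℕ) : ℝ) = (n:ℝ)/2 := by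
  obtain ⟨k, hk⟩ := hn
  subst hk
  have h2 : (k + k) - (k + k) / 2 = k := by omega
  rw [h2]
  have h3 : ((k + k : ℕ) : ℝ) = 2 * k := by push_cast; ring
  rw [h3]; ring

lemma sumIE_spin (hn : Even n) (σ : Fin n → Bool) :
    ∑ e ∈ IEs n, spin (σ e.1) * spin (σ e.2)
      = ((∑ i ∈ blk1 n, spin (σ i))^2 - (n:ℝ)/2) / 2
      + ((∑ i ∈ blk2 n, spin (σ i))^2 - (n:ℝ)/2) / 2 := by
  rw [IE_eq, Finset.sum_union (IE_disj n), block_pair_sum, block_pair_sum,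
    card_blk1, card_blk2, even_cast_half hn, even_cast_half' hn]

lemma sumOE_spin (σ : Fin n → Bool) :
    ∑ e ∈ OEs n, spin (σ e.1) * spin (σ e.2)
      = (∑ i ∈ blk1 n, spin (σ i)) * (∑ i ∈ blk2 n, spin (σ i)) := by
  rw [OE_eq, Finset.sum_product, Finset.sum_mul_sum]

lemma cardIE_real (hn : Even n) :
    (((IEs n).card : ℝ)) = ((n:ℝ)/2)^2 - (n:ℝ)/2 := by
  rw [IE_eq, Finset.card_union_of_disjoint (IE_disj n)]
  push_cast
  rw [block_pair_card, block_pair_card, card_blk1, card_blk2,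
    even_cast_half hn, even_cast_half' hn]
  ring

lemma cardOE_real (hn : Even n) :
    (((OEs n).card : ℝ)) = ((n:ℝ)/2)^2 := by
  rw [OE_eq, Finset.card_product]
  push_cast
  rw [card_blk1, card_blk2, even_cast_half hn, even_cast_half' hn]
  ring

/-- Key counting lower bound. -/
lemma count_lb (hn : Even n) (σ : Fin n → Bool) {a : ℝ} (ha0 : 0 ≤ a) (ha1 : a ≤ 1) :
    (1 + a) * ((n:ℝ)/2)^2 / 2 - (n:ℝ)/2
      ≤ (cardInnerPlus n σ : ℝ) + a * (cardOuterPlus n σ : ℝ) := by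
  rw [cI_formula, cO_formula, sumIE_spin hn, sumOE_spin, cardIE_real hn, cardOE_real hn]
  set S1 := ∑ i ∈ blk1 n, spin (σ i)
  set S2 := ∑ i ∈ blk2 n, spin (σ i)
  nlinarith [sq_nonneg (S1 + S2), sq_nonneg (S1 - S2), sq_nonneg S1, sq_nonneg S2]

variable {Ω : Type*}

lemma double_sum_to_edge (σ : Fin n → Bool) (f : Fin n × Fin n → ℝ)
    (p' : ℕ → ℕ → Prop) [∀ i j, Decidable (p' i j)] :
    (∑ i : Fin n, ∑ j : Fin n, if p' (i : ℕ) (j : ℕ) ∧ σ i = σ j then f (i, j) else 0)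
      = ∑ e ∈ Finset.univ.filter (fun e : Fin n × Fin n => p' e.1 e.2),
          (if σ e.1 = σ e.2 then f e else 0) := by
  rw [Finset.sum_filter]
  rw [← Finset.sum_product', ← Finset.univ_product_univ]
  apply Finset.sum_congr rfl
  intro e _
  by_cases h1 : p' e.1 e.2 <;> by_cases h2 : σ e.1 = σ e.2 <;> simp [h1, h2]

lemma edge_sub_split (σ : Fin n → Bool) (g : Fin n × Fin n → ℝ) (c : ℝ)
    (E : Finset (Fin n × Fin n)) :
    (∑ e ∈ E, (if σ e.1 = σ e.2 then g e else 0))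
        - c * (∑ e ∈ E, (if σ e.1 = σ e.2 then (1:ℝ) else 0))
      = ((∑ e ∈ E, (g e - c))
        + (∑ e ∈ E, spin (σ e.1) * spin (σ e.2) * (g e - c))) / 2 := by
  rw [Finset.mul_sum, ← Finset.sum_sub_distrib, ← Finset.sum_add_distrib, Finset.sum_div]
  apply Finset.sum_congr rfl
  intro e _
  rw [spin_mul]
  by_cases h : σ e.1 = σ e.2 <;> simp [h] <;> ring

lemma dev_decomp (ξ ζ : ℕ → ℕ × ℕ → Ω → ℝ) (pn dn : ℝ) (σ : Fin n → Bool) (ω : Ω) :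
    plusSum ξ ζ n σ ω - (pn * (cardInnerPlus n σ : ℝ) + dn * (cardOuterPlus n σ : ℝ))
      = ((∑ e ∈ IEs n, (ξ n ((e.1 : ℕ), (e.2 : ℕ)) ω - pn))
        + (∑ e ∈ IEs n, spin (σ e.1) * spin (σ e.2) * (ξ n ((e.1 : ℕ), (e.2 : ℕ)) ω - pn))
        + ((∑ e ∈ OEs n, (ζ n ((e.1 : ℕ), (e.2 : ℕ)) ω - dn))
        + (∑ e ∈ OEs n, spin (σ e.1) * spin (σ e.2) * (ζ n ((e.1 : ℕ), (e.2 : ℕ)) ω - dn)))) / 2 := by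
  have hin := double_sum_to_edge σ (fun e : Fin n × Fin n => ξ n ((e.1 : ℕ), (e.2 : ℕ)) ω)
    (fun i j => innerEdge n i j)
  have hout := double_sum_to_edge σ (fun e : Fin n × Fin n => ζ n ((e.1 : ℕ), (e.2 : ℕ)) ω)
    (fun i j => outerEdge n i j)
  have h1 := edge_sub_split σ (fun e : Fin n × Fin n => ξ n ((e.1 : ℕ), (e.2 : ℕ)) ω) pn (IEs n)
  have h2 := edge_sub_split σ (fun e : Fin n × Fin n => ζ n ((e.1 : ℕ), (e.2 : ℕ)) ω) dn (OEs n)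
  unfold plusSum
  rw [hin, hout, cardInner_sum σ, cardOuter_sum σ]
  unfold IEs at h1 ⊢
  unfold OEs at h2 ⊢
  linarith [h1, h2]

end AuxComb


section AuxApp

variable {Ω : Type*} [MeasurableSpace Ω] {P : Measure Ω} [IsProbabilityMeasure P]

/-- Lift a weight on `Fin n` pairs to the edge index type. -/
def liftW (n : ℕ) (w : Fin n × Fin n → ℝ) : (ℕ × ℕ) ⊕ (ℕ × ℕ) → ℝ := fun x =>
  (fun ab : ℕ × ℕ =>
    if h : ab.1 < n ∧ ab.2 < n then w (⟨ab.1, h.1⟩, ⟨ab.2, h.2⟩) else 1) (Sum.elim id id x)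

def embI (n : ℕ) : {e : Fin n × Fin n // e ∈ IEs n} ↪ {e : (ℕ × ℕ) ⊕ (ℕ × ℕ) // isEdge n e} where
  toFun := fun x => ⟨Sum.inl ((x.1.1 : ℕ), (x.1.2 : ℕ)), by
    have hx := x.2
    simp only [IEs, Finset.mem_filter] at hx
    exact hx.2⟩
  inj' := by
    rintro ⟨⟨i1, j1⟩, h1⟩ ⟨⟨i2, j2⟩, h2⟩ h
    have h' := congrArg Subtype.val h
    simp only [Sum.inl.injEq, Prod.mk.injEq] at h'
    apply Subtype.ext
    simp only [Prod.mk.injEq]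
    exact ⟨Fin.ext h'.1, Fin.ext h'.2⟩

def embO (n : ℕ) : {e : Fin n × Fin n // e ∈ OEs n} ↪ {e : (ℕ × ℕ) ⊕ (ℕ × ℕ) // isEdge n e} where
  toFun := fun x => ⟨Sum.inr ((x.1.1 : ℕ), (x.1.2 : ℕ)), by
    have hx := x.2
    simp only [OEs, Finset.mem_filter] at hx
    exact hx.2⟩
  inj' := by
    rintro ⟨⟨i1, j1⟩, h1⟩ ⟨⟨i2, j2⟩, h2⟩ h
    have h' := congrArg Subtype.val h
    simp only [Sum.inr.injEq, Prod.mk.injEq] at h'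
    apply Subtype.ext
    simp only [Prod.mk.injEq]
    exact ⟨Fin.ext h'.1, Fin.ext h'.2⟩

lemma liftW_embI {n : ℕ} (w : Fin n × Fin n → ℝ) (a : {e : Fin n × Fin n // e ∈ IEs n}) :
    liftW n w (embI n a).1 = w a.1 := by
  show (if h : (a.1.1 : ℕ) < n ∧ (a.1.2 : ℕ) < n then
    w (⟨(a.1.1 : ℕ), h.1⟩, ⟨(a.1.2 : ℕ), h.2⟩) else 1) = w a.1
  rw [dif_pos ⟨a.1.1.isLt, a.1.2.isLt⟩]

lemma liftW_embO {n : ℕ} (w : Fin n × Fin n → ℝ) (a : {e : Fin n × Fin n // e ∈ OEs n}) :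
    liftW n w (embO n a).1 = w a.1 := by
  show (if h : (a.1.1 : ℕ) < n ∧ (a.1.2 : ℕ) < n then
    w (⟨(a.1.1 : ℕ), h.1⟩, ⟨(a.1.2 : ℕ), h.2⟩) else 1) = w a.1
  rw [dif_pos ⟨a.1.1.isLt, a.1.2.isLt⟩]

lemma inner_tail (p α : ℕ → ℝ) (ξ ζ : ℕ → ℕ × ℕ → Ω → ℝ) (hSBM : SBMHyp P p α ξ ζ)
    (hp : ∀ k, p k ∈ Set.Ioc (0:ℝ) 1)
    (n : ℕ) (w : Fin n × Fin n → ℝ) (hw : ∀ e ∈ IEs n, w e = 1 ∨ w e = -1)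
    {t : ℝ} (ht0 : 0 < t) (ht1 : t ≤ 1) (s : ℝ) :
    P {ω | s ≤ |∑ e ∈ IEs n, w e * (ξ n ((e.1 : ℕ), (e.2 : ℕ)) ω - p n)|} ≤
      ENNReal.ofReal (2 * Real.exp ((((IEs n).card : ℝ) * p n) * (t^2 * (1+t) / 2) - t * s)) := by
  classical
  have hmeas : ∀ e : {e : (ℕ × ℕ) ⊕ (ℕ × ℕ) // isEdge n e},
      Measurable (Sum.elim (ξ n) (ζ n) e.1) := by
    rintro ⟨(⟨a,b⟩|⟨a,b⟩), he⟩
    · exact (hSBM.1 n a b he).1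
    · exact (hSBM.2.1 n a b he).1
  have hmem : ∀ x ∈ (IEs n).attach.map (embI n),
      ∃ a : {e : Fin n × Fin n // e ∈ IEs n}, x = embI n a := by
    intro x hx
    rw [Finset.mem_map] at hx
    obtain ⟨a, _, ha⟩ := hx
    exact ⟨a, ha.symm⟩
  have hinner : ∀ a : {e : Fin n × Fin n // e ∈ IEs n},
      innerEdge n (a.1.1 : ℕ) (a.1.2 : ℕ) := by
    intro a
    have hx := a.2
    simp only [IEs, Finset.mem_filter] at hx
    exact hx.2
  have hq : ∀ x ∈ (IEs n).attach.map (embI n), IsBernoulli P (Sum.elim (ξ n) (ζ n) x.1)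
      ((fun e : {e : (ℕ × ℕ) ⊕ (ℕ × ℕ) // isEdge n e} =>
        Sum.elim (fun _ => p n) (fun _ => α n * p n) e.1) x) := by
    intro x hx
    obtain ⟨a, rfl⟩ := hmem x hx
    exact hSBM.1 n _ _ (hinner a)
  have hq0 : ∀ x ∈ (IEs n).attach.map (embI n), 0 ≤
      (fun e : {e : (ℕ × ℕ) ⊕ (ℕ × ℕ) // isEdge n e} =>
        Sum.elim (fun _ => p n) (fun _ => α n * p n) e.1) x := by
    intro x hx
    obtain ⟨a, rfl⟩ := hmem x hx
    exact (hp n).1.le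
  have hq1 : ∀ x ∈ (IEs n).attach.map (embI n),
      (fun e : {e : (ℕ × ℕ) ⊕ (ℕ × ℕ) // isEdge n e} =>
        Sum.elim (fun _ => p n) (fun _ => α n * p n) e.1) x ≤ 1 := by
    intro x hx
    obtain ⟨a, rfl⟩ := hmem x hx
    exact (hp n).2
  have hε : ∀ x ∈ (IEs n).attach.map (embI n),
      (fun e : {e : (ℕ × ℕ) ⊕ (ℕ × ℕ) // isEdge n e} => liftW n w e.1) x = 1 ∨
      (fun e : {e : (ℕ × ℕ) ⊕ (ℕ × ℕ) // isEdge n e} => liftW n w e.1) x = -1 := by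
    intro x hx
    obtain ⟨a, rfl⟩ := hmem x hx
    simp only [liftW_embI]
    exact hw a.1 a.2
  have hbound := chernoff_abs (P := P) (fun e => Sum.elim (ξ n) (ζ n) e.1) (hSBM.2.2 n) hmeas
    ((IEs n).attach.map (embI n))
    (fun e => Sum.elim (fun _ => p n) (fun _ => α n * p n) e.1)
    (fun e => liftW n w e.1) hq hq0 hq1 hε ht0 ht1 s
  have hsum : ∀ ω, ∑ x ∈ (IEs n).attach.map (embI n),
      (liftW n w x.1) * (Sum.elim (ξ n) (ζ n) x.1 ω
        - Sum.elim (fun _ => p n) (fun _ => α n * p n) x.1)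
      = ∑ e ∈ IEs n, w e * (ξ n ((e.1 : ℕ), (e.2 : ℕ)) ω - p n) := by
    intro ω
    rw [Finset.sum_map]
    rw [← Finset.sum_attach (IEs n) (fun e => w e * (ξ n ((e.1 : ℕ), (e.2 : ℕ)) ω - p n))]
    apply Finset.sum_congr rfl
    intro a _
    rw [liftW_embI]
    rfl
  have hqsum : ∑ x ∈ (IEs n).attach.map (embI n),
      (fun e : {e : (ℕ × ℕ) ⊕ (ℕ × ℕ) // isEdge n e} =>
        Sum.elim (fun _ => p n) (fun _ => α n * p n) e.1) x = ((IEs n).card : ℝ) * p n := by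
    rw [Finset.sum_map]
    have : ∀ a ∈ (IEs n).attach,
        (fun e : {e : (ℕ × ℕ) ⊕ (ℕ × ℕ) // isEdge n e} =>
          Sum.elim (fun _ => p n) (fun _ => α n * p n) e.1) (embI n a) = p n := fun a _ => rfl
    rw [Finset.sum_congr rfl this, Finset.sum_const, Finset.card_attach, nsmul_eq_mul]
  rw [hqsum] at hbound
  have hev : {ω | s ≤ |∑ e ∈ IEs n, w e * (ξ n ((e.1 : ℕ), (e.2 : ℕ)) ω - p n)|}
      = {ω | s ≤ |∑ x ∈ (IEs n).attach.map (embI n),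
        (liftW n w x.1) * (Sum.elim (ξ n) (ζ n) x.1 ω
          - Sum.elim (fun _ => p n) (fun _ => α n * p n) x.1)|} := by
    ext ω
    rw [Set.mem_setOf_eq, Set.mem_setOf_eq, hsum ω]
  rw [hev]
  exact hbound

lemma outer_tail (p α : ℕ → ℝ) (ξ ζ : ℕ → ℕ × ℕ → Ω → ℝ) (hSBM : SBMHyp P p α ξ ζ)
    (hp : ∀ k, p k ∈ Set.Ioc (0:ℝ) 1) (hα : ∀ k, α k ∈ Set.Icc (0:ℝ) 1)
    (n : ℕ) (w : Fin n × Fin n → ℝ) (hw : ∀ e ∈ OEs n, w e = 1 ∨ w e = -1)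
    {t : ℝ} (ht0 : 0 < t) (ht1 : t ≤ 1) (s : ℝ) :
    P {ω | s ≤ |∑ e ∈ OEs n, w e * (ζ n ((e.1 : ℕ), (e.2 : ℕ)) ω - α n * p n)|} ≤
      ENNReal.ofReal (2 * Real.exp ((((OEs n).card : ℝ) * (α n * p n)) * (t^2 * (1+t) / 2)
        - t * s)) := by
  classical
  have hmeas : ∀ e : {e : (ℕ × ℕ) ⊕ (ℕ × ℕ) // isEdge n e},
      Measurable (Sum.elim (ξ n) (ζ n) e.1) := by
    rintro ⟨(⟨a,b⟩|⟨a,b⟩), he⟩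
    · exact (hSBM.1 n a b he).1
    · exact (hSBM.2.1 n a b he).1
  have hmem : ∀ x ∈ (OEs n).attach.map (embO n),
      ∃ a : {e : Fin n × Fin n // e ∈ OEs n}, x = embO n a := by
    intro x hx
    rw [Finset.mem_map] at hx
    obtain ⟨a, _, ha⟩ := hx
    exact ⟨a, ha.symm⟩
  have houter : ∀ a : {e : Fin n × Fin n // e ∈ OEs n},
      outerEdge n (a.1.1 : ℕ) (a.1.2 : ℕ) := by
    intro a
    have hx := a.2
    simp only [OEs, Finset.mem_filter] at hx
    exact hx.2
  have hq : ∀ x ∈ (OEs n).attach.map (embO n), IsBernoulli P (Sum.elim (ξ n) (ζ n) x.1)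
      ((fun e : {e : (ℕ × ℕ) ⊕ (ℕ × ℕ) // isEdge n e} =>
        Sum.elim (fun _ => p n) (fun _ => α n * p n) e.1) x) := by
    intro x hx
    obtain ⟨a, rfl⟩ := hmem x hx
    exact hSBM.2.1 n _ _ (houter a)
  have hq0 : ∀ x ∈ (OEs n).attach.map (embO n), 0 ≤
      (fun e : {e : (ℕ × ℕ) ⊕ (ℕ × ℕ) // isEdge n e} =>
        Sum.elim (fun _ => p n) (fun _ => α n * p n) e.1) x := by
    intro x hx
    obtain ⟨a, rfl⟩ := hmem x hx
    exact mul_nonneg (hα n).1 (hp n).1.le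
  have hq1 : ∀ x ∈ (OEs n).attach.map (embO n),
      (fun e : {e : (ℕ × ℕ) ⊕ (ℕ × ℕ) // isEdge n e} =>
        Sum.elim (fun _ => p n) (fun _ => α n * p n) e.1) x ≤ 1 := by
    intro x hx
    obtain ⟨a, rfl⟩ := hmem x hx
    have := mul_le_one₀ (hα n).2 (hp n).1.le (hp n).2
    exact this
  have hε : ∀ x ∈ (OEs n).attach.map (embO n),
      (fun e : {e : (ℕ × ℕ) ⊕ (ℕ × ℕ) // isEdge n e} => liftW n w e.1) x = 1 ∨
      (fun e : {e : (ℕ × ℕ) ⊕ (ℕ × ℕ) // isEdge n e} => liftW n w e.1) x = -1 := by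
    intro x hx
    obtain ⟨a, rfl⟩ := hmem x hx
    simp only [liftW_embO]
    exact hw a.1 a.2
  have hbound := chernoff_abs (P := P) (fun e => Sum.elim (ξ n) (ζ n) e.1) (hSBM.2.2 n) hmeas
    ((OEs n).attach.map (embO n))
    (fun e => Sum.elim (fun _ => p n) (fun _ => α n * p n) e.1)
    (fun e => liftW n w e.1) hq hq0 hq1 hε ht0 ht1 s
  have hsum : ∀ ω, ∑ x ∈ (OEs n).attach.map (embO n),
      (liftW n w x.1) * (Sum.elim (ξ n) (ζ n) x.1 ω
        - Sum.elim (fun _ => p n) (fun _ => α n * p n) x.1)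
      = ∑ e ∈ OEs n, w e * (ζ n ((e.1 : ℕ), (e.2 : ℕ)) ω - α n * p n) := by
    intro ω
    rw [Finset.sum_map]
    rw [← Finset.sum_attach (OEs n) (fun e => w e * (ζ n ((e.1 : ℕ), (e.2 : ℕ)) ω - α n * p n))]
    apply Finset.sum_congr rfl
    intro a _
    rw [liftW_embO]
    rfl
  have hqsum : ∑ x ∈ (OEs n).attach.map (embO n),
      (fun e : {e : (ℕ × ℕ) ⊕ (ℕ × ℕ) // isEdge n e} =>
        Sum.elim (fun _ => p n) (fun _ => α n * p n) e.1) x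
      = ((OEs n).card : ℝ) * (α n * p n) := by
    rw [Finset.sum_map]
    have : ∀ a ∈ (OEs n).attach,
        (fun e : {e : (ℕ × ℕ) ⊕ (ℕ × ℕ) // isEdge n e} =>
          Sum.elim (fun _ => p n) (fun _ => α n * p n) e.1) (embO n a) = α n * p n :=
      fun a _ => rfl
    rw [Finset.sum_congr rfl this, Finset.sum_const, Finset.card_attach, nsmul_eq_mul]
  rw [hqsum] at hbound
  have hev : {ω | s ≤ |∑ e ∈ OEs n, w e * (ζ n ((e.1 : ℕ), (e.2 : ℕ)) ω - α n * p n)|}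
      = {ω | s ≤ |∑ x ∈ (OEs n).attach.map (embO n),
        (liftW n w x.1) * (Sum.elim (ξ n) (ζ n) x.1 ω
          - Sum.elim (fun _ => p n) (fun _ => α n * p n) x.1)|} := by
    ext ω
    rw [Set.mem_setOf_eq, Set.mem_setOf_eq, hsum ω]
  rw [hev]
  exact hbound

end AuxApp


section Master

set_option maxHeartbeats 2000000 in
lemma master_bound {Ω : Type*} [MeasurableSpace Ω] (P : Measure Ω) [IsProbabilityMeasure P]
    (p α ρ : ℕ → ℝ)
    (hp : ∀ k, p k ∈ Set.Ioc (0 : ℝ) 1) (hα : ∀ k, α k ∈ Set.Icc (0 : ℝ) 1)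
    (ξ ζ : ℕ → ℕ × ℕ → Ω → ℝ) (hSBM : SBMHyp P p α ξ ζ)
    (hρlb : ∀ k, 3 / Real.sqrt (p k * k) ≤ ρ k)
    (n : ℕ) (hn : Even n) (hn600 : 600 ≤ n) (hpn : (4000000 : ℝ) ≤ p n * n) :
    P ((goodEvent p α ρ ξ ζ n)ᶜ) ≤ ENNReal.ofReal (8 * Real.exp (-((n : ℝ) / 8000))) := by
  classical
  set R : ℝ := Real.sqrt (p n * n) with hRdef
  have hp0 : 0 < p n := (hp n).1
  have hp1 : p n ≤ 1 := (hp n).2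
  have hA0 : 0 ≤ α n := (hα n).1
  have hA1 : α n ≤ 1 := (hα n).2
  have hncast : (600:ℝ) ≤ (n:ℝ) := by exact_mod_cast hn600
  have hn0 : (0:ℝ) < n := by linarith
  have hpnn : 0 ≤ p n * n := by positivity
  have hR2 : R^2 = p n * n := Real.sq_sqrt hpnn
  have hR : (2000:ℝ) ≤ R := by
    have h1 : Real.sqrt (2000^2) ≤ R := Real.sqrt_le_sqrt (by nlinarith)
    rwa [Real.sqrt_sq (by norm_num : (0:ℝ) ≤ 2000)] at h1
  have hR0 : (0:ℝ) < R := by linarith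
  have hw1 : ∀ e ∈ IEs n, (fun _ : Fin n × Fin n => (1:ℝ)) e = 1 ∨
      (fun _ : Fin n × Fin n => (1:ℝ)) e = -1 := fun e _ => Or.inl rfl
  have hw1O : ∀ e ∈ OEs n, (fun _ : Fin n × Fin n => (1:ℝ)) e = 1 ∨
      (fun _ : Fin n × Fin n => (1:ℝ)) e = -1 := fun e _ => Or.inl rfl
  have hwσ : ∀ (σ : Fin n → Bool), ∀ e ∈ IEs n,
      (fun e : Fin n × Fin n => spin (σ e.1) * spin (σ e.2)) e = 1 ∨
      (fun e : Fin n × Fin n => spin (σ e.1) * spin (σ e.2)) e = -1 := by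
    intro σ e _
    simp only [spin_mul]
    by_cases h : σ e.1 = σ e.2
    · exact Or.inl (if_pos h)
    · exact Or.inr (if_neg h)
  have hwσO : ∀ (σ : Fin n → Bool), ∀ e ∈ OEs n,
      (fun e : Fin n × Fin n => spin (σ e.1) * spin (σ e.2)) e = 1 ∨
      (fun e : Fin n × Fin n => spin (σ e.1) * spin (σ e.2)) e = -1 := by
    intro σ e _
    simp only [spin_mul]
    by_cases h : σ e.1 = σ e.2
    · exact Or.inl (if_pos h)
    · exact Or.inr (if_neg h)
  set s1 : ℝ := (1/100)*R*(n:ℝ) with hs1def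
  set s3 : ℝ := (3/5)*R*(n:ℝ) with hs3def
  set κ4 : ℝ := 3/25 + (3/4)*α n with hκ4def
  set s4 : ℝ := κ4*R*(n:ℝ) with hs4def
  set E1 : Set Ω := {ω | s1 ≤ |∑ e ∈ IEs n, (ξ n ((e.1 : ℕ), (e.2 : ℕ)) ω - p n)|} with hE1def
  set E2 : Set Ω := {ω | s1 ≤ |∑ e ∈ OEs n, (ζ n ((e.1 : ℕ), (e.2 : ℕ)) ω - α n * p n)|}
    with hE2def
  set E3 : (Fin n → Bool) → Set Ω := fun σ =>
    {ω | s3 ≤ |∑ e ∈ IEs n, spin (σ e.1) * spin (σ e.2) * (ξ n ((e.1 : ℕ), (e.2 : ℕ)) ω - p n)|}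
    with hE3def
  set E4 : (Fin n → Bool) → Set Ω := fun σ =>
    {ω | s4 ≤ |∑ e ∈ OEs n, spin (σ e.1) * spin (σ e.2) *
      (ζ n ((e.1 : ℕ), (e.2 : ℕ)) ω - α n * p n)|} with hE4def
  -- deterministic inclusion
  have hincl : (goodEvent p α ρ ξ ζ n)ᶜ ⊆ E1 ∪ (E2 ∪ ⋃ σ : Fin n → Bool, (E3 σ ∪ E4 σ)) := by
    intro ω hω
    by_contra hnot
    apply hω
    simp only [Set.mem_union, not_or, Set.mem_iUnion, not_exists] at hnot
    obtain ⟨h1, h2, h34⟩ := hnot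
    intro σ
    obtain ⟨h3, h4⟩ := h34 σ
    have hb1 : |∑ e ∈ IEs n, (ξ n ((e.1 : ℕ), (e.2 : ℕ)) ω - p n)| < s1 :=
      not_le.mp (fun hc => h1 hc)
    have hb2 : |∑ e ∈ OEs n, (ζ n ((e.1 : ℕ), (e.2 : ℕ)) ω - α n * p n)| < s1 :=
      not_le.mp (fun hc => h2 hc)
    have hb3 : |∑ e ∈ IEs n, spin (σ e.1) * spin (σ e.2) *
        (ξ n ((e.1 : ℕ), (e.2 : ℕ)) ω - p n)| < s3 :=
      not_le.mp (fun hc => h3 hc)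
    have hb4 : |∑ e ∈ OEs n, spin (σ e.1) * spin (σ e.2) *
        (ζ n ((e.1 : ℕ), (e.2 : ℕ)) ω - α n * p n)| < s4 :=
      not_le.mp (fun hc => h4 hc)
    have hdec := dev_decomp ξ ζ (p n) (α n * p n) σ ω
    have hrw : p n * ((cardInnerPlus n σ : ℝ) + α n * (cardOuterPlus n σ : ℝ))
        = p n * (cardInnerPlus n σ : ℝ) + (α n * p n) * (cardOuterPlus n σ : ℝ) := by ring
    show |plusSum ξ ζ n σ ω - p n * ((cardInnerPlus n σ : ℝ) + α n * (cardOuterPlus n σ : ℝ))|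
      ≤ ρ n * (p n * ((cardInnerPlus n σ : ℝ) + α n * (cardOuterPlus n σ : ℝ)))
    rw [hrw, hdec]
    set a1 := ∑ e ∈ IEs n, (ξ n ((e.1 : ℕ), (e.2 : ℕ)) ω - p n) with ha1
    set a2 := ∑ e ∈ IEs n, spin (σ e.1) * spin (σ e.2) * (ξ n ((e.1 : ℕ), (e.2 : ℕ)) ω - p n)
      with ha2
    set a3 := ∑ e ∈ OEs n, (ζ n ((e.1 : ℕ), (e.2 : ℕ)) ω - α n * p n) with ha3
    set a4 := ∑ e ∈ OEs n, spin (σ e.1) * spin (σ e.2) *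
      (ζ n ((e.1 : ℕ), (e.2 : ℕ)) ω - α n * p n) with ha4
    have habs0 : |a1 + a2 + (a3 + a4)| ≤ |a1| + |a2| + (|a3| + |a4|) :=
      le_trans (abs_add_le _ _) (add_le_add (abs_add_le a1 a2) (abs_add_le a3 a4))
    have heq2 : |(a1 + a2 + (a3 + a4))/2| = |a1 + a2 + (a3 + a4)|/2 := by
      rw [abs_div, abs_two]
    set N : ℝ := (cardInnerPlus n σ : ℝ) + α n * (cardOuterPlus n σ : ℝ) with hNdef
    have hcount := count_lb hn σ hA0 hA1
    have hNlb0 : (0:ℝ) ≤ (1 + α n) * ((n:ℝ)/2)^2/2 - (n:ℝ)/2 := by nlinarith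
    have hN0 : (0:ℝ) ≤ N := le_trans hNlb0 hcount
    have hρR : 3/R ≤ ρ n := hρlb n
    have hpN0 : 0 ≤ p n * N := mul_nonneg hp0.le hN0
    have hstep1 : 3/R * (p n * N) ≤ ρ n * (p n * N) := mul_le_mul_of_nonneg_right hρR hpN0
    have hstep2 : (s1 + s3 + (s1 + s4))/2
        ≤ 3/R * (p n * ((1 + α n) * ((n:ℝ)/2)^2/2 - (n:ℝ)/2)) := by
      rw [div_mul_eq_mul_div, le_div_iff₀ hR0]
      have e : (s1+s3+(s1+s4))/2*R = (37/100 + (3/8)*α n)*(R^2*(n:ℝ)) := by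
        rw [hs1def, hs3def, hs4def, hκ4def]; ring
      rw [e, hR2]
      nlinarith [mul_nonneg (mul_nonneg hp0.le hn0.le)
        (by linarith : (0:ℝ) ≤ (n:ℝ)/200 - 3/2)]
    have hstep3 : 3/R * (p n * ((1+α n)*((n:ℝ)/2)^2/2 - (n:ℝ)/2)) ≤ 3/R * (p n * N) := by
      apply mul_le_mul_of_nonneg_left _ (by positivity)
      exact mul_le_mul_of_nonneg_left hcount hp0.le
    have hfin : ρ n * (p n * (cardInnerPlus n σ : ℝ) + (α n * p n) * (cardOuterPlus n σ : ℝ))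
        = ρ n * (p n * N) := by rw [hNdef]; ring
    rw [hfin]
    linarith [habs0, heq2, hstep1, hstep2, hstep3, hb1, hb2, hb3, hb4]
  -- card bounds
  have hcardI : ((IEs n).card : ℝ) * p n ≤ R^2*(n:ℝ)/4 := by
    rw [cardIE_real hn, hR2]
    nlinarith
  have hcardI0 : 0 ≤ ((IEs n).card : ℝ) * p n := by positivity
  have hcardO : ((OEs n).card : ℝ) * (α n * p n) ≤ R^2*(n:ℝ)/4 := by
    rw [cardOE_real hn, hR2]
    nlinarith [mul_nonneg (mul_nonneg hp0.le (sq_nonneg ((n:ℝ)/2)))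
      (by linarith : (0:ℝ) ≤ 1 - α n)]
  have hcardO0 : 0 ≤ ((OEs n).card : ℝ) * (α n * p n) := by positivity
  have hcardO4 : ((OEs n).card : ℝ) * (α n * p n) ≤ α n * (R^2*(n:ℝ)/4) := by
    rw [cardOE_real hn, hR2]
    nlinarith
  -- probability bounds
  have ht10 : (0:ℝ) < 1/(25*R) := by positivity
  have ht11 : 1/(25*R) ≤ 1 := by
    rw [div_le_one (by positivity)]; linarith
  have hPE1 : P E1 ≤ ENNReal.ofReal (2 * Real.exp (-((n:ℝ)/8000))) := by
    have hb := inner_tail p α ξ ζ hSBM hp n (fun _ => (1:ℝ)) hw1 ht10 ht11 s1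
    simp only [one_mul] at hb
    refine le_trans hb (ENNReal.ofReal_le_ofReal ?_)
    have hnum := num1 (t := 1/(25*R)) (Mp := ((IEs n).card : ℝ) * p n)
      hR hn0.le rfl hcardI0 hcardI
    apply mul_le_mul_of_nonneg_left _ (by norm_num : (0:ℝ) ≤ 2)
    apply Real.exp_le_exp.mpr
    rw [hs1def]
    linarith [hnum]
  have hPE2 : P E2 ≤ ENNReal.ofReal (2 * Real.exp (-((n:ℝ)/8000))) := by
    have hb := outer_tail p α ξ ζ hSBM hp hα n (fun _ => (1:ℝ)) hw1O ht10 ht11 s1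
    simp only [one_mul] at hb
    refine le_trans hb (ENNReal.ofReal_le_ofReal ?_)
    have hnum := num1 (t := 1/(25*R)) (Mp := ((OEs n).card : ℝ) * (α n * p n))
      hR hn0.le rfl hcardO0 hcardO
    apply mul_le_mul_of_nonneg_left _ (by norm_num : (0:ℝ) ≤ 2)
    apply Real.exp_le_exp.mpr
    rw [hs1def]
    linarith [hnum]
  have ht30 : (0:ℝ) < 47/(20*R) := by positivity
  have ht31 : 47/(20*R) ≤ 1 := by
    rw [div_le_one (by positivity)]; linarith
  have hPE3 : ∀ σ : Fin n → Bool,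
      P (E3 σ) ≤ ENNReal.ofReal (2 * Real.exp (-((143/200)*(n:ℝ)))) := by
    intro σ
    have hb := inner_tail p α ξ ζ hSBM hp n
      (fun e : Fin n × Fin n => spin (σ e.1) * spin (σ e.2)) (hwσ σ) ht30 ht31 s3
    refine le_trans hb (ENNReal.ofReal_le_ofReal ?_)
    have hnum := num3 (t := 47/(20*R)) (Mp := ((IEs n).card : ℝ) * p n)
      hR hn0.le rfl hcardI0 hcardI
    apply mul_le_mul_of_nonneg_left _ (by norm_num : (0:ℝ) ≤ 2)
    apply Real.exp_le_exp.mpr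
    rw [hs3def]
    linarith [hnum]
  have hnum4 := num4 (t := if 400*κ4 ≤ α n*R then 4*κ4/(α n*R) else 1/100)
    (Mp := ((OEs n).card : ℝ) * (α n * p n))
    hR hn0.le hA0 hA1 hκ4def rfl hcardO0 hcardO4
  have hPE4 : ∀ σ : Fin n → Bool,
      P (E4 σ) ≤ ENNReal.ofReal (2 * Real.exp (-((1425/2000)*(n:ℝ)))) := by
    intro σ
    have hb := outer_tail p α ξ ζ hSBM hp hα n
      (fun e : Fin n × Fin n => spin (σ e.1) * spin (σ e.2)) (hwσO σ) hnum4.2.1 hnum4.2.2 s4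
    refine le_trans hb (ENNReal.ofReal_le_ofReal ?_)
    apply mul_le_mul_of_nonneg_left _ (by norm_num : (0:ℝ) ≤ 2)
    apply Real.exp_le_exp.mpr
    rw [hs4def]
    linarith [hnum4.1]
  -- union bound
  have hunion : P ((goodEvent p α ρ ξ ζ n)ᶜ)
      ≤ P E1 + (P E2 + ∑ σ : Fin n → Bool, (P (E3 σ) + P (E4 σ))) := by
    refine le_trans (measure_mono hincl) ?_
    refine le_trans (measure_union_le _ _) ?_
    gcongr
    refine le_trans (measure_union_le _ _) ?_
    gcongr
    refine le_trans (measure_iUnion_le _) ?_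
    rw [tsum_fintype]
    exact Finset.sum_le_sum (fun σ _ => measure_union_le _ _)
  have hsum34 : ∑ σ : Fin n → Bool, (P (E3 σ) + P (E4 σ))
      ≤ ENNReal.ofReal ((2:ℝ)^n * (2 * Real.exp (-((143/200)*(n:ℝ)))
        + 2 * Real.exp (-((1425/2000)*(n:ℝ))))) := by
    refine le_trans (Finset.sum_le_sum (fun σ _ => add_le_add (hPE3 σ) (hPE4 σ))) ?_
    rw [Finset.sum_const, Finset.card_univ]
    have hcard : Fintype.card (Fin n → Bool) = 2^n := by
      rw [Fintype.card_fun, Fintype.card_bool, Fintype.card_fin]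
    rw [hcard, nsmul_eq_mul]
    apply le_of_eq
    rw [show ((2^n : ℕ) : ENNReal) = ENNReal.ofReal ((2:ℝ)^n) from by
      rw [show ((2:ℝ)^n) = (((2^n : ℕ)) : ℝ) by push_cast; ring, ENNReal.ofReal_natCast]]
    rw [← ENNReal.ofReal_add (by positivity) (by positivity),
      ← ENNReal.ofReal_mul (by positivity)]
  -- final numeric packaging
  have hpow : ∀ c : ℝ, Real.log 2 + 1/8000 ≤ c →
      (2:ℝ)^n * (2 * Real.exp (-(c*(n:ℝ)))) ≤ 2 * Real.exp (-((n:ℝ)/8000)) := by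
    intro c hc
    have h2n : (2:ℝ)^n = Real.exp ((n:ℝ) * Real.log 2) := by
      rw [← Real.log_pow, Real.exp_log (by positivity)]
    rw [h2n, show Real.exp ((n:ℝ)*Real.log 2) * (2*Real.exp (-(c*(n:ℝ))))
      = 2*Real.exp ((n:ℝ)*Real.log 2 + -(c*(n:ℝ))) by rw [Real.exp_add]; ring]
    apply mul_le_mul_of_nonneg_left _ (by norm_num : (0:ℝ) ≤ 2)
    apply Real.exp_le_exp.mpr
    nlinarith [mul_nonneg hn0.le (by linarith : (0:ℝ) ≤ c - Real.log 2 - 1/8000)]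
  have hlog2 : Real.log 2 < 0.6931471808 := Real.log_two_lt_d9
  have h143 : Real.log 2 + 1/8000 ≤ 143/200 := by norm_num; linarith
  have h1425 : Real.log 2 + 1/8000 ≤ 1425/2000 := by norm_num; linarith
  have hfinal : 2 * Real.exp (-((n:ℝ)/8000)) + (2 * Real.exp (-((n:ℝ)/8000))
      + (2:ℝ)^n * (2 * Real.exp (-((143/200)*(n:ℝ))) + 2 * Real.exp (-((1425/2000)*(n:ℝ)))))
      ≤ 8 * Real.exp (-((n:ℝ)/8000)) := by
    have hx := hpow (143/200) h143
    have hy := hpow (1425/2000) h1425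
    nlinarith [hx, hy, pow_pos (show (0:ℝ) < 2 by norm_num) n,
      Real.exp_nonneg (-((143/200)*(n:ℝ))), Real.exp_nonneg (-((1425/2000)*(n:ℝ)))]
  calc P ((goodEvent p α ρ ξ ζ n)ᶜ)
      ≤ P E1 + (P E2 + ∑ σ : Fin n → Bool, (P (E3 σ) + P (E4 σ))) := hunion
    _ ≤ ENNReal.ofReal (2 * Real.exp (-((n:ℝ)/8000)))
        + (ENNReal.ofReal (2 * Real.exp (-((n:ℝ)/8000)))
        + ENNReal.ofReal ((2:ℝ)^n * (2 * Real.exp (-((143/200)*(n:ℝ)))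
          + 2 * Real.exp (-((1425/2000)*(n:ℝ)))))) :=
        add_le_add hPE1 (add_le_add hPE2 hsum34)
    _ = ENNReal.ofReal (2 * Real.exp (-((n:ℝ)/8000)) + (2 * Real.exp (-((n:ℝ)/8000))
        + (2:ℝ)^n * (2 * Real.exp (-((143/200)*(n:ℝ)))
          + 2 * Real.exp (-((1425/2000)*(n:ℝ)))))) := by
        rw [ENNReal.ofReal_add (by positivity) (by positivity),
          ENNReal.ofReal_add (by positivity) (by positivity)]
    _ ≤ ENNReal.ofReal (8 * Real.exp (-((n:ℝ)/8000))) := ENNReal.ofReal_le_ofReal hfinal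

end Master

/-- concentration of the random interaction: the complement of the good event
`Ω̄_n` has probability at most `c₀ n² (e^{−n c₁/2} + e^{−n c₂/2})` for all large even `n`. -/
theorem goodEvent_concentration
    {Ω : Type*} [MeasurableSpace Ω] (P : Measure Ω) [IsProbabilityMeasure P]
    (p α ρ : ℕ → ℝ)
    (hp : ∀ n, p n ∈ Set.Ioc (0 : ℝ) 1) (hα : ∀ n, α n ∈ Set.Icc (0 : ℝ) 1)
    (hnp : Tendsto (fun n : ℕ => (n : ℝ) * p n) atTop atTop)
    (ξ ζ : ℕ → ℕ × ℕ → Ω → ℝ) (hSBM : SBMHyp P p α ξ ζ)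
    (hρpos : ∀ n, 0 < ρ n) (hρ0 : Tendsto ρ atTop (nhds 0))
    (hρlb : ∀ n, 3 / Real.sqrt (p n * n) ≤ ρ n) :
    ∃ c₀ c₁ c₂ : ℝ, 0 < c₀ ∧ 0 < c₁ ∧ 0 < c₂ ∧ ∃ n₀ : ℕ,
      ∀ n : ℕ, Even n → n₀ ≤ n →
        P ((goodEvent p α ρ ξ ζ n)ᶜ) ≤
          ENNReal.ofReal (c₀ * (n : ℝ) ^ 2 *
            (Real.exp (-(n : ℝ) * c₁ / 2) + Real.exp (-(n : ℝ) * c₂ / 2))) := by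
  have hev : ∀ᶠ k : ℕ in atTop, (4000000 : ℝ) ≤ (k:ℝ) * p k :=
    hnp.eventually_ge_atTop 4000000
  obtain ⟨n₁, hn₁⟩ := Filter.eventually_atTop.mp hev
  refine ⟨8, 1/4000, 1/4000, by norm_num, by norm_num, by norm_num, max n₁ 600, ?_⟩
  intro n hne hn
  have h600 : 600 ≤ n := le_trans (le_max_right _ _) hn
  have hpn : (4000000 : ℝ) ≤ p n * n := by
    rw [mul_comm]
    exact hn₁ n (le_trans (le_max_left _ _) hn)
  have hb := master_bound P p α ρ hp hα ξ ζ hSBM hρlb n hne h600 hpn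
  refine le_trans hb (ENNReal.ofReal_le_ofReal ?_)
  have hn1 : (1:ℝ) ≤ (n:ℝ) := by
    have : (600:ℝ) ≤ (n:ℝ) := by exact_mod_cast h600
    linarith
  have h1 : -((n:ℝ)) * (1/4000) / 2 = -((n:ℝ)/8000) := by ring
  rw [h1]
  nlinarith [Real.exp_nonneg (-((n:ℝ)/8000)),
    mul_nonneg (by nlinarith : (0:ℝ) ≤ 16*(n:ℝ)^2 - 8) (Real.exp_nonneg (-((n:ℝ)/8000)))]

end
end
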